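/- arXiv:1407.7916 — 4 statements merged into one kernel-verified Lean document; each statement's English description precedes it below -/
import Mathlib

section
/- A partition μ having exactly ℓ removable corners has exactly ℓ+1 addable corners, and if R_1,…,R_ℓ are the weights of its removable corners and A_0,…,A_ℓ the weights of its addable corners, then in ℚ(q,t) one has (1−t)(1−q)·B_μ = 1 + qt·(R_1+⋯+R_ℓ) − (A_0+⋯+A_ℓ). -/
open scoped Classical
open PowerSeries

noncomputable section

abbrev K := FractionRing (MvPolynomial (Fin 2) ℚ)

def q : K := algebraMap (MvPolynomial (Fin 2) ℚ) K (MvPolynomial.X 0)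
def t : K := algebraMap (MvPolynomial (Fin 2) ℚ) K (MvPolynomial.X 1)

/-- the weight of a cell `(i,j)` (row `i`, column `j`) is `t^i * q^j` -/
def w (c : ℕ × ℕ) : K := t ^ c.1 * q ^ c.2

/-- `B_μ = Σ_{c ∈ μ} w(c)` -/
def Bsum (μ : YoungDiagram) : K := ∑ c ∈ μ.cells, w c

/-- a removable corner: a cell of `μ` whose removal leaves a Young diagram -/
def IsRemovable (μ : YoungDiagram) (c : ℕ × ℕ) : Prop :=
  c ∈ μ ∧ IsLowerSet (↑(μ.cells.erase c) : Set (ℕ × ℕ))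

/-- an addable corner: a cell not in `μ` whose addition gives a Young diagram -/
def IsAddable (μ : YoungDiagram) (c : ℕ × ℕ) : Prop :=
  c ∉ μ ∧ IsLowerSet (↑(insert c μ.cells) : Set (ℕ × ℕ))

/-- the arm of a cell: number of cells of `μ` strictly east of it in its row -/
def arm (μ : YoungDiagram) (c : ℕ × ℕ) : ℕ :=
  (μ.cells.filter fun d => d.1 = c.1 ∧ c.2 < d.2).card

/-- the leg of a cell: number of cells of `μ` strictly north of it in its column -/
def leg (μ : YoungDiagram) (c : ℕ × ℕ) : ℕ :=
  (μ.cells.filter fun d => d.2 = c.2 ∧ c.1 < d.1).card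


lemma rem_iff (μ : YoungDiagram) (i j : ℕ) :
    IsRemovable μ (i, j) ↔ j + 1 = μ.rowLen i ∧ μ.rowLen (i+1) ≤ j := by
  constructor
  · rintro ⟨hm, hl⟩
    rw [YoungDiagram.mem_iff_lt_rowLen] at hm
    constructor
    · by_contra h
      have h1 : j + 1 < μ.rowLen i := by omega
      have h2 : ((i, j+1) : ℕ × ℕ) ∈ (↑(μ.cells.erase (i,j)) : Set (ℕ × ℕ)) := by
        simp [YoungDiagram.mem_cells, YoungDiagram.mem_iff_lt_rowLen, h1]
      have h3 := hl (a := (i, j+1)) (b := (i,j)) (by simp [Prod.le_def]) h2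
      simp at h3
    · by_contra h
      push_neg at h
      have h2 : ((i+1, j) : ℕ × ℕ) ∈ (↑(μ.cells.erase (i,j)) : Set (ℕ × ℕ)) := by
        simp [YoungDiagram.mem_cells, YoungDiagram.mem_iff_lt_rowLen, h]
      have h3 := hl (a := (i+1, j)) (b := (i,j)) (by simp [Prod.le_def]) h2
      simp at h3
  · rintro ⟨h1, h2⟩
    constructor
    · rw [YoungDiagram.mem_iff_lt_rowLen]; omega
    · rintro ⟨a, b⟩ ⟨x, y⟩ hle hmem
      simp only [Finset.coe_erase, Set.mem_diff, Finset.mem_coe, YoungDiagram.mem_cells,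
        Set.mem_singleton_iff] at hmem ⊢
      obtain ⟨hab, hne⟩ := hmem
      obtain ⟨hx, hy⟩ : x ≤ a ∧ y ≤ b := hle
      refine ⟨μ.up_left_mem hx hy hab, ?_⟩
      intro heq
      rw [Prod.mk.injEq] at heq
      rw [YoungDiagram.mem_iff_lt_rowLen] at hab
      rcases Nat.lt_or_ge i a with ha | ha
      · have h3 := μ.rowLen_anti (i+1) a ha
        omega
      · have ha' : a = i := by omega
        rw [ha'] at hab
        refine hne ?_
        rw [Prod.mk.injEq]
        omega

lemma add_iff (μ : YoungDiagram) (i j : ℕ) :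
    IsAddable μ (i, j) ↔ j = μ.rowLen i ∧ (i = 0 ∨ μ.rowLen i < μ.rowLen (i-1)) := by
  constructor
  · rintro ⟨hm, hl⟩
    rw [YoungDiagram.mem_iff_lt_rowLen] at hm
    push_neg at hm
    constructor
    · by_contra h
      have h1 : μ.rowLen i < j := by omega
      have h2 : ((i, j-1) : ℕ × ℕ) ∈ (↑(insert ((i,j) : ℕ × ℕ) μ.cells) : Set (ℕ × ℕ)) := by
        refine hl (a := (i,j)) (by simp [Prod.le_def]) (by simp)
      simp only [Finset.coe_insert, Set.mem_insert_iff, Finset.mem_coe,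
        YoungDiagram.mem_cells, Prod.mk.injEq, YoungDiagram.mem_iff_lt_rowLen] at h2
      omega
    · by_contra h
      push_neg at h
      obtain ⟨h0, h1⟩ := h
      have h2 : ((i-1, j) : ℕ × ℕ) ∈ (↑(insert ((i,j) : ℕ × ℕ) μ.cells) : Set (ℕ × ℕ)) := by
        refine hl (a := (i,j)) (by simp [Prod.le_def]) (by simp)
      simp only [Finset.coe_insert, Set.mem_insert_iff, Finset.mem_coe,
        YoungDiagram.mem_cells, Prod.mk.injEq, YoungDiagram.mem_iff_lt_rowLen] at h2
      rcases h2 with ⟨h2, -⟩ | h2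
      · omega
      · omega
  · rintro ⟨h1, h2⟩
    constructor
    · rw [YoungDiagram.mem_iff_lt_rowLen]; omega
    · rintro ⟨a, b⟩ ⟨x, y⟩ hle hmem
      simp only [Finset.coe_insert, Set.mem_insert_iff, Finset.mem_coe,
        YoungDiagram.mem_cells, Prod.mk.injEq] at hmem ⊢
      obtain ⟨hx, hy⟩ : x ≤ a ∧ y ≤ b := hle
      rcases hmem with ⟨hai, hbj⟩ | hab
      · rcases Nat.lt_or_ge x i with hxi | hxi
        · right
          rw [YoungDiagram.mem_iff_lt_rowLen]
          have h3 := μ.rowLen_anti x (i-1) (by omega)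
          have h4 : x = x := rfl
          rcases h2 with h2 | h2
          · omega
          · omega
        · have hx2 : x = i := by omega
          rcases Nat.lt_or_ge y j with hyj | hyj
          · right
            rw [YoungDiagram.mem_iff_lt_rowLen, hx2]
            omega
          · left; omega
      · right; exact μ.up_left_mem hx hy hab

theorem stmt_1 (μ : YoungDiagram) (ℓ : ℕ) (Rem Add : Finset (ℕ × ℕ))
    (hRem : ∀ c, c ∈ Rem ↔ IsRemovable μ c)
    (hAdd : ∀ c, c ∈ Add ↔ IsAddable μ c)
    (hℓ : Rem.card = ℓ) :
    Add.card = ℓ + 1 ∧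
    (1 - t) * (1 - q) * Bsum μ =
      1 + q * t * (∑ r ∈ Rem, w r) - ∑ a ∈ Add, w a := by
  set n := μ.colLen 0 with hn_def
  have hn : ∀ i, i < n ↔ 0 < μ.rowLen i := by
    intro i
    rw [hn_def, ← YoungDiagram.mem_iff_lt_colLen (j := 0), YoungDiagram.mem_iff_lt_rowLen]
  have hlamn : μ.rowLen n = 0 := by
    by_contra h
    exact absurd ((hn n).mpr (Nat.pos_of_ne_zero h)) (lt_irrefl n)
  set RemRows : Finset ℕ := (Finset.range n).filter (fun i => μ.rowLen (i+1) < μ.rowLen i)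
    with hRR
  set AddRows : Finset ℕ :=
    (Finset.range (n+1)).filter (fun i => i = 0 ∨ μ.rowLen i < μ.rowLen (i-1)) with hAR
  have Rem_eq : Rem = RemRows.image (fun i => (i, μ.rowLen i - 1)) := by
    ext ⟨a, b⟩
    rw [hRem, rem_iff]
    simp only [Finset.mem_image, hRR, Finset.mem_filter, Finset.mem_range]
    constructor
    · rintro ⟨h1, h2⟩
      refine ⟨a, ⟨(hn a).mpr (by omega), by omega⟩, ?_⟩
      rw [Prod.mk.injEq]
      omega
    · rintro ⟨i, ⟨hi1, hi2⟩, heq⟩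
      rw [Prod.mk.injEq] at heq
      obtain ⟨h5, hb⟩ := heq
      rw [← h5]
      have h6 := (hn i).mp hi1
      omega
  have Add_eq : Add = AddRows.image (fun i => (i, μ.rowLen i)) := by
    ext ⟨a, b⟩
    rw [hAdd, add_iff]
    simp only [Finset.mem_image, hAR, Finset.mem_filter, Finset.mem_range]
    constructor
    · rintro ⟨h1, h2⟩
      refine ⟨a, ⟨?_, h2⟩, by rw [Prod.mk.injEq]; omega⟩
      rcases h2 with rfl | h2
      · omega
      · have := (hn (a-1)).mpr (by omega)
        omega
    · rintro ⟨i, ⟨hi1, hi2⟩, heq⟩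
      rw [Prod.mk.injEq] at heq
      obtain ⟨h5, hb⟩ := heq
      rw [← h5]
      exact ⟨by omega, hi2⟩
  have hinj1 : Set.InjOn (fun i => (i, μ.rowLen i - 1)) RemRows :=
    fun x _ y _ h => congrArg Prod.fst h
  have hinj2 : Set.InjOn (fun i => (i, μ.rowLen i)) AddRows :=
    fun x _ y _ h => congrArg Prod.fst h
  -- the cardinality claim
  have hARins : AddRows = insert 0 (RemRows.image Nat.succ) := by
    ext k
    simp only [hAR, hRR, Finset.mem_insert, Finset.mem_image, Finset.mem_filter,
      Finset.mem_range]
    constructor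
    · rintro ⟨hk, hk0 | hk2⟩
      · exact Or.inl hk0
      · have hk0 : k ≠ 0 := by
          intro h0
          rw [h0] at hk2
          simp at hk2
        refine Or.inr ⟨k - 1, ⟨?_, ?_⟩, ?_⟩
        · omega
        · have hkk : k - 1 + 1 = k := by omega
          rw [hkk]
          exact hk2
        · show k - 1 + 1 = k
          omega
    · rintro (rfl | ⟨i, ⟨hi1, hi2⟩, rfl⟩)
      · exact ⟨by omega, Or.inl rfl⟩
      · exact ⟨by omega, Or.inr (by simpa using hi2)⟩
  have hcard : Add.card = ℓ + 1 := by
    have h1 : Rem.card = RemRows.card := by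
      rw [Rem_eq, Finset.card_image_of_injOn hinj1]
    have h2 : Add.card = AddRows.card := by
      rw [Add_eq, Finset.card_image_of_injOn hinj2]
    have h0 : (0 : ℕ) ∉ RemRows.image Nat.succ := by
      simp
    rw [h2, hARins, Finset.card_insert_of_notMem h0,
      Finset.card_image_of_injective _ Nat.succ_injective, ← h1, hℓ]
  refine ⟨hcard, ?_⟩
  -- the sum identity
  have E1 : ∑ a ∈ Add, w a = ∑ i ∈ AddRows, t ^ i * q ^ (μ.rowLen i) := by
    rw [Add_eq, Finset.sum_image (fun x hx y hy h => hinj2 hx hy h)]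
    exact Finset.sum_congr rfl fun i _ => by simp [w]
  have E2 : q * t * (∑ r ∈ Rem, w r)
      = ∑ i ∈ RemRows, t * (t ^ i * q ^ (μ.rowLen i)) := by
    rw [Rem_eq, Finset.sum_image (fun x hx y hy h => hinj1 hx hy h), Finset.mul_sum]
    refine Finset.sum_congr rfl (fun i hi => ?_)
    simp only [hRR, Finset.mem_filter, Finset.mem_range] at hi
    obtain ⟨m, hm⟩ : ∃ m, μ.rowLen i = m + 1 := ⟨μ.rowLen i - 1, by omega⟩
    simp only [w, hm, Nat.add_sub_cancel, pow_succ]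
    ring
  have E3 := Finset.sum_filter_add_sum_filter_not (Finset.range (n+1))
    (fun i => i = 0 ∨ μ.rowLen i < μ.rowLen (i-1)) (fun i => t ^ i * q ^ (μ.rowLen i))
  have E4 := Finset.sum_filter_add_sum_filter_not (Finset.range n)
    (fun i => μ.rowLen (i+1) < μ.rowLen i) (fun i => t * (t ^ i * q ^ (μ.rowLen i)))
  have E5 : ∑ i ∈ (Finset.range (n+1)).filter
        (fun i => ¬(i = 0 ∨ μ.rowLen i < μ.rowLen (i-1))), t ^ i * q ^ (μ.rowLen i)
      = ∑ i ∈ (Finset.range n).filter (fun i => ¬ μ.rowLen (i+1) < μ.rowLen i),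
          t * (t ^ i * q ^ (μ.rowLen i)) := by
    refine Finset.sum_nbij' (fun k => k - 1) (fun i => i + 1) ?_ ?_ ?_ ?_ ?_
    · intro k hk
      simp only [Finset.mem_filter, Finset.mem_range, not_or, not_lt] at hk ⊢
      obtain ⟨hk1, hk0, hk2⟩ := hk
      have hkk : k - 1 + 1 = k := by omega
      rw [hkk]
      exact ⟨by omega, hk2⟩
    · intro i hi
      simp only [Finset.mem_filter, Finset.mem_range, not_or, not_lt] at hi ⊢
      obtain ⟨hi1, hi2⟩ := hi
      have hii : i + 1 - 1 = i := by omega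
      rw [hii]
      exact ⟨by omega, by omega, hi2⟩
    · intro k hk
      simp only [Finset.mem_filter, Finset.mem_range, not_or, not_lt] at hk
      show k - 1 + 1 = k
      omega
    · intro i _
      show i + 1 - 1 = i
      omega
    · intro k hk
      simp only [Finset.mem_filter, Finset.mem_range, not_or, not_lt] at hk
      obtain ⟨hk1, hk0, hk2⟩ := hk
      have hkk : k - 1 + 1 = k := by omega
      have hanti := μ.rowLen_anti (k-1) k (by omega)
      have hlamq : μ.rowLen (k-1) = μ.rowLen k := le_antisymm hk2 hanti
      rw [hlamq]
      have hpow : (t : K) * t ^ (k-1) = t ^ k := by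
        rw [← pow_succ', hkk]
      rw [← mul_assoc, hpow]
  have hcells : μ.cells = (Finset.range n).biUnion (fun i => μ.row i) := by
    ext ⟨a, b⟩
    simp only [Finset.mem_biUnion, Finset.mem_range, YoungDiagram.mem_cells,
      YoungDiagram.mem_row_iff]
    constructor
    · intro h
      refine ⟨a, (hn a).mpr ?_, h, rfl⟩
      have := YoungDiagram.mem_iff_lt_rowLen.mp h
      omega
    · rintro ⟨i, -, h, rfl⟩
      exact h
  have hdisj : (↑(Finset.range n) : Set ℕ).PairwiseDisjoint (fun i => μ.row i) := by
    intro x _ y _ hxy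
    simp only [Function.onFun, Finset.disjoint_left]
    intro c hc hc'
    rw [YoungDiagram.mem_row_iff] at hc hc'
    exact hxy (hc.2.symm.trans hc'.2)
  have hB : Bsum μ
      = ∑ i ∈ Finset.range n, (t^i * ∑ j ∈ Finset.range (μ.rowLen i), q^j) := by
    rw [Bsum, hcells, Finset.sum_biUnion hdisj]
    refine Finset.sum_congr rfl fun i _ => ?_
    rw [YoungDiagram.row_eq_prod, Finset.sum_product, Finset.sum_singleton, Finset.mul_sum]
    exact Finset.sum_congr rfl fun j _ => by simp [w]
  have E7 : (1-q) * Bsum μ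
      = (∑ i ∈ Finset.range n, t^i) - ∑ i ∈ Finset.range n, t^i * q^(μ.rowLen i) := by
    rw [hB, Finset.mul_sum, ← Finset.sum_sub_distrib]
    refine Finset.sum_congr rfl fun i _ => ?_
    have hg := geom_sum_mul q (μ.rowLen i)
    linear_combination (-(t:K)^i) * hg
  have E6 : ∑ i ∈ Finset.range (n+1), t^i * q^(μ.rowLen i)
      = (∑ i ∈ Finset.range n, t^i * q^(μ.rowLen i)) + t^n := by
    rw [Finset.sum_range_succ, hlamn, pow_zero, mul_one]
  have Emul : ∑ i ∈ Finset.range n, t * (t^i * q^(μ.rowLen i))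
      = t * ∑ i ∈ Finset.range n, t^i * q^(μ.rowLen i) :=
    (Finset.mul_sum _ _ _).symm
  have Egeo := geom_sum_mul t n
  linear_combination E1 - E2 + (1-t)*E7 - Egeo + E3 + E6 - E4 - E5 - Emul

end
end

section
/- Let ν be a partition with ℓ removable corners, of weights R_1,…,R_ℓ, and ℓ+1 addable corners. Fix an addable corner of ν of weight A and let μ = ν together with that cell. Then in ℚ(q,t): ∏_{s∈R_{μν}} (q^{a_ν(s)}−t^{l_ν(s)+1})/(q^{a_μ(s)}−t^{l_μ(s)+1}) · ∏_{s∈C_{μν}} (t^{l_ν(s)}−q^{a_ν(s)+1})/(t^{l_μ(s)}−q^{a_μ(s)+1}) = (1/A)·∏_{i=1}^{ℓ}(1 − qt·R_i/A) / ∏_{A'≠A}(1 − A'/A), where the last product runs over the weights A' of the addable corners of ν other than the chosen one. (Equality of Macdonald's row–column product formula for the e_1-Pieri coefficient d_{μν} with its corner-weight formula.) -/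
open scoped Classical
open PowerSeries

noncomputable section

lemma algMap_inj : Function.Injective (algebraMap (MvPolynomial (Fin 2) ℚ) K) :=
  IsFractionRing.injective _ _

lemma mono_inj {a b cc d : ℕ} (h : t^a * q^b = t^cc * q^d) : a = cc ∧ b = d := by
  have h2 : (MvPolynomial.X 1 : MvPolynomial (Fin 2) ℚ)^a * MvPolynomial.X 0 ^ b
      = MvPolynomial.X 1 ^ cc * MvPolynomial.X 0 ^ d := by
    apply algMap_inj
    simpa [t, q, map_mul, map_pow] using h
  rw [MvPolynomial.X_pow_eq_monomial, MvPolynomial.X_pow_eq_monomial,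
    MvPolynomial.X_pow_eq_monomial, MvPolynomial.X_pow_eq_monomial,
    MvPolynomial.monomial_mul, MvPolynomial.monomial_mul] at h2
  have h3 := MvPolynomial.coeff_monomial (Finsupp.single (1 : Fin 2) a + Finsupp.single 0 b)
    (Finsupp.single (1 : Fin 2) cc + Finsupp.single 0 d) ((1:ℚ)*1)
  rw [← h2, MvPolynomial.coeff_monomial, if_pos rfl] at h3
  have h4 : Finsupp.single (1 : Fin 2) cc + Finsupp.single 0 d
      = Finsupp.single (1 : Fin 2) a + Finsupp.single 0 b := by
    by_contra hne
    rw [if_neg hne] at h3; norm_num at h3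
  constructor
  · have := DFunLike.congr_fun h4 (1 : Fin 2)
    simpa [Finsupp.single_apply] using this.symm
  · have := DFunLike.congr_fun h4 (0 : Fin 2)
    simpa [Finsupp.single_apply] using this.symm

lemma t_ne_zero : t ≠ 0 := by
  have : (MvPolynomial.X 1 : MvPolynomial (Fin 2) ℚ) ≠ 0 := MvPolynomial.X_ne_zero 1
  simpa [t, map_eq_zero_iff _ algMap_inj] using this

lemma q_ne_zero : q ≠ 0 := by
  have : (MvPolynomial.X 0 : MvPolynomial (Fin 2) ℚ) ≠ 0 := MvPolynomial.X_ne_zero 0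
  simpa [q, map_eq_zero_iff _ algMap_inj] using this

lemma qt_sub_ne (a b : ℕ) (hb : 0 < b) : q^a - t^b ≠ 0 := by
  intro h
  have h2 : t^0 * q^a = t^b * q^0 := by
    rw [sub_eq_zero] at h; simpa using h
  obtain ⟨h3, _⟩ := mono_inj h2
  omega

lemma tq_sub_ne (a b : ℕ) (hb : 0 < b) : t^a - q^b ≠ 0 := by
  intro h
  have h2 : t^a * q^0 = t^0 * q^b := by
    rw [sub_eq_zero] at h; simpa using h
  obtain ⟨_, h3⟩ := mono_inj h2
  omega
open Finset in
lemma telescope (u v : K) (hne : ∀ a b : ℕ, 0 < b → u^a - v^b ≠ 0)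
    (R C : ℕ) (L : ℕ → ℕ) (hmono : ∀ j, j < C → L (j+1) ≤ L j)
    (hpos : ∀ j, j < C → R < L j) (hLC : L C = R) :
    ∏ j ∈ range C, ((u^(C-1-j) - v^(L j - R))/(u^(C-j) - v^(L j - R))) =
    (∏ j ∈ (range C).filter (fun j => L (j+1) < L j), (u^(C-1-j) - v^(L j - R))) /
    ((∏ j ∈ (range C).filter (fun j => j = 0 ∨ L j < L (j-1)), (u^(C-j) - v^(L j - R)))) := by
  rcases Nat.eq_zero_or_pos C with hC | hC
  · subst hC; simp
  obtain ⟨C', rfl⟩ : ∃ C', C = C'+1 := ⟨C-1, by omega⟩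
  have hdropC' : L (C'+1) < L C' := by rw [hLC]; exact hpos C' (lt_add_one C')
  set g : ℕ → K := fun j => u^(C'+1-1-j) - v^(L j - R) with hg
  set f : ℕ → K := fun j => u^(C'+1-j) - v^(L j - R) with hf
  set X : K := ∏ j ∈ (range C').filter (fun j => ¬ L (j+1) < L j), g j with hX
  have hXne : X ≠ 0 := by
    rw [hX]
    apply Finset.prod_ne_zero_iff.mpr
    intro j hj
    simp only [mem_filter, mem_range] at hj
    exact hne _ _ (by have := hpos j (by omega); omega)
  -- the non-drop part of f(·+1) equals the non-drop part of g
  have hfg : ∏ j ∈ (range C').filter (fun j => ¬ L (j+1) < L j), f (j+1) = X := by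
    rw [hX]
    apply Finset.prod_congr rfl
    intro j hj
    simp only [mem_filter, mem_range] at hj
    have h1 : L (j+1) = L j := le_antisymm (hmono j (by omega)) (by omega)
    have h2 : C' + 1 - (j+1) = C' + 1 - 1 - j := by omega
    rw [hf, hg]; simp only [h1, h2]
  -- numerator
  have hNum : ∏ j ∈ range (C'+1), g j
      = (∏ j ∈ (range (C'+1)).filter (fun j => L (j+1) < L j), g j) * X := by
    rw [← Finset.prod_filter_mul_prod_filter_not (range (C'+1)) (fun j => L (j+1) < L j) g]
    congr 1
    rw [hX]
    congr 1
    rw [Finset.range_add_one, Finset.filter_insert, if_neg (by simpa using hdropC')]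
  -- the addable-index set
  have hAr : (range (C'+1)).filter (fun j => j = 0 ∨ L j < L (j-1))
      = insert 0 (((range C').filter (fun j => L (j+1) < L j)).image (· + 1)) := by
    ext a
    simp only [mem_filter, mem_range, mem_insert, mem_image]
    constructor
    · rintro ⟨ha, h0 | hdrop⟩
      · exact Or.inl h0
      · rcases Nat.eq_zero_or_pos a with rfl | hapos
        · exact Or.inl rfl
        · right
          refine ⟨a-1, ⟨by omega, ?_⟩, by omega⟩
          have : a - 1 + 1 = a := by omega
          rw [this]; exact hdrop
    · rintro (rfl | ⟨b, ⟨hb, hdrop⟩, rfl⟩)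
      · exact ⟨by omega, Or.inl rfl⟩
      · exact ⟨by omega, Or.inr (by simpa using hdrop)⟩
  -- denominator
  have hDen : ∏ j ∈ range (C'+1), f j
      = (∏ j ∈ (range (C'+1)).filter (fun j => j = 0 ∨ L j < L (j-1)), f j) * X := by
    rw [Finset.prod_range_succ' f, hAr,
      ← Finset.prod_filter_mul_prod_filter_not (range C') (fun j => L (j+1) < L j) (fun j => f (j+1)),
      hfg, Finset.prod_insert, Finset.prod_image]
    · ring
    · intro x _ y _ h; simp only at h; omega
    · simp only [mem_image]
      rintro ⟨b, _, hb⟩; omega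
  rw [Finset.prod_div_distrib, hNum, hDen, mul_div_mul_right _ _ hXne]
open Finset in
lemma Ar_eq (C' : ℕ) (L : ℕ → ℕ) :
    (range (C'+1)).filter (fun j => j = 0 ∨ L j < L (j-1))
    = insert 0 (((range C').filter (fun j => L (j+1) < L j)).image (· + 1)) := by
  ext a
  simp only [mem_filter, mem_range, mem_insert, mem_image]
  constructor
  · rintro ⟨ha, h0 | hdrop⟩
    · exact Or.inl h0
    · rcases Nat.eq_zero_or_pos a with rfl | hapos
      · exact Or.inl rfl
      · right
        refine ⟨a-1, ⟨by omega, ?_⟩, by omega⟩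
        have : a - 1 + 1 = a := by omega
        rw [this]; exact hdrop
  · rintro (rfl | ⟨b, ⟨hb, hdrop⟩, rfl⟩)
    · exact ⟨by omega, Or.inl rfl⟩
    · exact ⟨by omega, Or.inr (by simpa using hdrop)⟩

open Finset in
lemma rowEval (u v : K) (hu : u ≠ 0) (hv : v ≠ 0) (hne : ∀ a b : ℕ, 0 < b → u^a - v^b ≠ 0)
    (R C : ℕ) (L : ℕ → ℕ) (hmono : ∀ j, j < C → L (j+1) ≤ L j)
    (hpos : ∀ j, j < C → R < L j) (hLC : L C = R) :
    ∏ j ∈ range C, ((u^(C-1-j) - v^(L j - R))/(u^(C-j) - v^(L j - R))) =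
    (∏ j ∈ (range C).filter (fun j => L (j+1) < L j), (1 - u*v*(v^(L j - 1) * u^j)/(v^R * u^C))) /
    ((∏ j ∈ (range C).filter (fun j => j = 0 ∨ L j < L (j-1)), (1 - (v^(L j) * u^j)/(v^R * u^C))) * u^C) := by
  have hA : (v:K)^R * u^C ≠ 0 := mul_ne_zero (pow_ne_zero _ hv) (pow_ne_zero _ hu)
  rw [telescope u v hne R C L hmono hpos hLC]
  rcases Nat.eq_zero_or_pos C with hC | hC
  · subst hC; simp
  obtain ⟨C', rfl⟩ : ∃ C', C = C'+1 := ⟨C-1, by omega⟩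
  have hdropC' : L (C'+1) < L C' := by rw [hLC]; exact hpos C' (lt_add_one C')
  have hN : ∏ j ∈ (range (C'+1)).filter (fun j => L (j+1) < L j), (u^(C'+1-1-j) - v^(L j - R))
      = (∏ j ∈ (range (C'+1)).filter (fun j => L (j+1) < L j), u^(C'+1-1-j)) *
        ∏ j ∈ (range (C'+1)).filter (fun j => L (j+1) < L j),
          (1 - u*v*(v^(L j - 1) * u^j)/(v^R * u^(C'+1))) := by
    rw [← Finset.prod_mul_distrib]
    apply Finset.prod_congr rfl
    intro j hj
    simp only [mem_filter, mem_range] at hj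
    obtain ⟨e, he⟩ : ∃ e, C'+1 = j+1+e := ⟨C'-j, by omega⟩
    obtain ⟨b, hb⟩ : ∃ b, L j = R+1+b := ⟨L j - R - 1, by have := hpos j (by omega); omega⟩
    have h1 : L j - R = b+1 := by omega
    have h2 : L j - 1 = R + b := by omega
    have h3 : C'+1-1-j = e := by omega
    rw [h1, h2, h3, he]
    field_simp
    ring
  have hD : ∏ j ∈ (range (C'+1)).filter (fun j => j = 0 ∨ L j < L (j-1)), (u^(C'+1-j) - v^(L j - R))
      = (∏ j ∈ (range (C'+1)).filter (fun j => j = 0 ∨ L j < L (j-1)), u^(C'+1-j)) *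
        ∏ j ∈ (range (C'+1)).filter (fun j => j = 0 ∨ L j < L (j-1)),
          (1 - (v^(L j) * u^j)/(v^R * u^(C'+1))) := by
    rw [← Finset.prod_mul_distrib]
    apply Finset.prod_congr rfl
    intro j hj
    simp only [mem_filter, mem_range] at hj
    obtain ⟨e, he⟩ : ∃ e, C'+1 = j+e ∧ 0 < e := ⟨C'+1-j, by omega⟩
    obtain ⟨b, hb⟩ : ∃ b, L j = R+1+b := ⟨L j - R - 1, by have := hpos j (by omega); omega⟩
    have h1 : L j - R = b+1 := by omega
    have h2 : C'+1-j = e := by omega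
    rw [h1, h2, hb, he.1]
    field_simp
    ring
  have hPow : ∏ j ∈ (range (C'+1)).filter (fun j => j = 0 ∨ L j < L (j-1)), u^(C'+1-j)
      = u^(C'+1) * ∏ j ∈ (range (C'+1)).filter (fun j => L (j+1) < L j), u^(C'+1-1-j) := by
    rw [Ar_eq C' L, Finset.prod_insert, Finset.prod_image]
    · have hDr : (range (C'+1)).filter (fun j => L (j+1) < L j)
          = insert C' ((range C').filter (fun j => L (j+1) < L j)) := by
        rw [Finset.range_add_one, Finset.filter_insert, if_pos hdropC']
      rw [hDr, Finset.prod_insert (by simp)]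
      have h4 : C'+1-1-C' = 0 := by omega
      rw [h4, pow_zero, one_mul, Nat.sub_zero]
      congr 1
      apply Finset.prod_congr rfl
      intro j hj
      congr 1
      simp only [mem_filter, mem_range] at hj
      omega
    · intro x _ y _ h; simp only at h; omega
    · simp only [mem_image]
      rintro ⟨b, _, hb⟩; omega
  rw [hN, hD, hPow]
  have hP : (∏ j ∈ (range (C'+1)).filter (fun j => L (j+1) < L j), u^(C'+1-1-j)) ≠ 0 :=
    Finset.prod_ne_zero_iff.mpr (fun j _ => pow_ne_zero _ hu)
  set P := ∏ j ∈ (range (C'+1)).filter (fun j => L (j+1) < L j), u^(C'+1-1-j)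
  set N' := ∏ j ∈ (range (C'+1)).filter (fun j => L (j+1) < L j),
      (1 - u*v*(v^(L j - 1) * u^j)/(v^R * u^(C'+1)))
  set D' := ∏ j ∈ (range (C'+1)).filter (fun j => j = 0 ∨ L j < L (j-1)),
      (1 - (v^(L j) * u^j)/(v^R * u^(C'+1)))
  rw [show P * N' = N' * P by ring, show u^(C'+1) * P * D' = (D' * u^(C'+1)) * P by ring,
    mul_div_mul_right _ _ hP]
def Removable' (d : YoungDiagram) (x : ℕ × ℕ) : Prop :=
  x ∈ d ∧ (x.1+1, x.2) ∉ d ∧ (x.1, x.2+1) ∉ d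

lemma isRemovable_iff (d : YoungDiagram) (x : ℕ × ℕ) :
    IsRemovable d x ↔ Removable' d x := by
  constructor
  · rintro ⟨hx, hl⟩
    refine ⟨hx, ?_, ?_⟩
    · intro hmem
      have h1 : ((x.1+1, x.2) : ℕ×ℕ) ∈ (↑(d.cells.erase x) : Set (ℕ×ℕ)) := by
        simp only [Finset.coe_erase, Set.mem_diff, Finset.mem_coe, YoungDiagram.mem_cells,
          Set.mem_singleton_iff]
        exact ⟨hmem, by simp [Prod.ext_iff]⟩
      have h2 := hl (show (x : ℕ×ℕ) ≤ (x.1+1, x.2) from ⟨Nat.le_succ _, le_refl _⟩) h1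
      simp at h2
    · intro hmem
      have h1 : ((x.1, x.2+1) : ℕ×ℕ) ∈ (↑(d.cells.erase x) : Set (ℕ×ℕ)) := by
        simp only [Finset.coe_erase, Set.mem_diff, Finset.mem_coe, YoungDiagram.mem_cells,
          Set.mem_singleton_iff]
        exact ⟨hmem, by simp [Prod.ext_iff]⟩
      have h2 := hl (show (x : ℕ×ℕ) ≤ (x.1, x.2+1) from ⟨le_refl _, Nat.le_succ _⟩) h1
      simp at h2
  · rintro ⟨hx, h1, h2⟩
    refine ⟨hx, ?_⟩
    intro a b hba ha
    simp only [Finset.coe_erase, Set.mem_diff, Finset.mem_coe, YoungDiagram.mem_cells,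
      Set.mem_singleton_iff] at ha ⊢
    obtain ⟨hamem, hax⟩ := ha
    refine ⟨d.isLowerSet hba hamem, ?_⟩
    rintro rfl
    -- b = x, x ≤ a, a ∈ d, a ≠ x
    rcases lt_or_ge b.1 a.1 with hlt | hge
    · exact h1 (d.up_left_mem hlt hba.2 hamem)
    · have hb1 : b.1 = a.1 := le_antisymm hba.1 hge
      rcases lt_or_ge b.2 a.2 with hlt2 | hge2
      · exact h2 (d.up_left_mem hba.1 hlt2 hamem)
      · exact hax (Prod.ext hb1.symm (le_antisymm hge2 hba.2))

def Addable' (d : YoungDiagram) (x : ℕ × ℕ) : Prop :=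
  x ∉ d ∧ (x.1 = 0 ∨ (x.1 - 1, x.2) ∈ d) ∧ (x.2 = 0 ∨ (x.1, x.2 - 1) ∈ d)

lemma isAddable_iff (d : YoungDiagram) (x : ℕ × ℕ) :
    IsAddable d x ↔ Addable' d x := by
  constructor
  · rintro ⟨hx, hl⟩
    refine ⟨hx, ?_, ?_⟩
    · rcases Nat.eq_zero_or_pos x.1 with h0 | hpos
      · exact Or.inl h0
      · right
        have h1 : (x : ℕ×ℕ) ∈ (↑(insert x d.cells) : Set (ℕ×ℕ)) := by simp
        have h2 := hl (show ((x.1-1, x.2) : ℕ×ℕ) ≤ x from ⟨by omega, le_refl _⟩) h1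
        simp only [Finset.coe_insert, Set.mem_insert_iff, Finset.mem_coe,
          YoungDiagram.mem_cells] at h2
        rcases h2 with h2 | h2
        · exfalso; have := congrArg Prod.fst h2; simp at this; omega
        · exact h2
    · rcases Nat.eq_zero_or_pos x.2 with h0 | hpos
      · exact Or.inl h0
      · right
        have h1 : (x : ℕ×ℕ) ∈ (↑(insert x d.cells) : Set (ℕ×ℕ)) := by simp
        have h2 := hl (show ((x.1, x.2-1) : ℕ×ℕ) ≤ x from ⟨le_refl _, by omega⟩) h1
        simp only [Finset.coe_insert, Set.mem_insert_iff, Finset.mem_coe,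
          YoungDiagram.mem_cells] at h2
        rcases h2 with h2 | h2
        · exfalso; have := congrArg Prod.snd h2; simp at this; omega
        · exact h2
  · rintro ⟨hx, h1, h2⟩
    refine ⟨hx, ?_⟩
    intro a b hba ha
    simp only [Finset.coe_insert, Set.mem_insert_iff, Finset.mem_coe,
      YoungDiagram.mem_cells] at ha ⊢
    rcases ha with rfl | hmem
    · -- b ≤ a = x
      rcases eq_or_ne b a with rfl | hne
      · exact Or.inl rfl
      · right
        rcases lt_or_ge b.1 a.1 with hlt | hge
        · rcases h1 with h0 | hmem'
          · omega
          · exact d.up_left_mem (by omega) hba.2 hmem'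
        · have hb1 : b.1 = a.1 := le_antisymm hba.1 hge
          have hlt2 : b.2 < a.2 := by
            rcases lt_or_ge b.2 a.2 with h | h
            · exact h
            · exact absurd (Prod.ext hb1 (le_antisymm hba.2 h)) hne
          rcases h2 with h0 | hmem'
          · omega
          · exact d.up_left_mem hba.1 (by omega) hmem'
    · exact Or.inr (d.isLowerSet hba hmem)

open Finset in
lemma arm_eq (d : YoungDiagram) {i j : ℕ} (h : (i,j) ∈ d) : arm d (i,j) = d.rowLen i - j - 1 := by
  have heq : (d.cells.filter fun x => x.1 = (i,j).1 ∧ (i,j).2 < x.2)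
      = (Finset.Ioo j (d.rowLen i)).image (fun k => (i, k)) := by
    ext ⟨a, b⟩
    simp only [mem_filter, YoungDiagram.mem_cells, mem_image, mem_Ioo, Prod.mk.injEq]
    constructor
    · rintro ⟨hmem, rfl, hj⟩
      exact ⟨b, ⟨hj, YoungDiagram.mem_iff_lt_rowLen.mp hmem⟩, rfl, rfl⟩
    · rintro ⟨k, ⟨hk1, hk2⟩, rfl, rfl⟩
      exact ⟨YoungDiagram.mem_iff_lt_rowLen.mpr hk2, rfl, hk1⟩
  rw [arm, heq, Finset.card_image_of_injective _ (fun a b hab => by simpa using hab),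
    Nat.card_Ioo]

open Finset in
lemma leg_eq (d : YoungDiagram) {i j : ℕ} (h : (i,j) ∈ d) : leg d (i,j) = d.colLen j - i - 1 := by
  have heq : (d.cells.filter fun x => x.2 = (i,j).2 ∧ (i,j).1 < x.1)
      = (Finset.Ioo i (d.colLen j)).image (fun k => (k, j)) := by
    ext ⟨a, b⟩
    simp only [mem_filter, YoungDiagram.mem_cells, mem_image, mem_Ioo, Prod.mk.injEq]
    constructor
    · rintro ⟨hmem, rfl, hi⟩
      exact ⟨a, ⟨hi, YoungDiagram.mem_iff_lt_colLen.mp hmem⟩, rfl, rfl⟩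
    · rintro ⟨k, ⟨hk1, hk2⟩, rfl, rfl⟩
      exact ⟨YoungDiagram.mem_iff_lt_colLen.mpr hk2, rfl, hk1⟩
  rw [leg, heq, Finset.card_image_of_injective _ (fun a b hab => by simpa using hab),
    Nat.card_Ioo]

lemma rowLen_eq (d : YoungDiagram) (i m : ℕ) (h : ∀ k, (i,k) ∈ d ↔ k < m) : d.rowLen i = m := by
  have h1 := (YoungDiagram.mem_iff_lt_rowLen.symm.trans (h m))
  have h2 := (YoungDiagram.mem_iff_lt_rowLen.symm.trans (h (d.rowLen i)))
  omega

lemma colLen_eq (d : YoungDiagram) (j m : ℕ) (h : ∀ k, (k,j) ∈ d ↔ k < m) : d.colLen j = m := by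
  have h1 := (YoungDiagram.mem_iff_lt_colLen.symm.trans (h m))
  have h2 := (YoungDiagram.mem_iff_lt_colLen.symm.trans (h (d.colLen j)))
  omega
lemma removable'_mk (d : YoungDiagram) (i j : ℕ) :
    Removable' d (i,j) ↔ (i,j) ∈ d ∧ (i+1, j) ∉ d ∧ (i, j+1) ∉ d := Iff.rfl

lemma addable'_mk (d : YoungDiagram) (i j : ℕ) :
    Addable' d (i,j) ↔ (i,j) ∉ d ∧ (i = 0 ∨ (i-1, j) ∈ d) ∧ (j = 0 ∨ (i, j-1) ∈ d) := Iff.rfl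

open Finset in
lemma rem_eq (ν : YoungDiagram) (R C : ℕ) (hrl : ν.rowLen R = C) (hcl : ν.colLen C = R)
    (Rem : Finset (ℕ × ℕ)) (hRem : ∀ x, x ∈ Rem ↔ IsRemovable ν x) :
    Rem = ((range C).filter (fun j => ν.colLen (j+1) < ν.colLen j)).image
        (fun j => (ν.colLen j - 1, j))
      ∪ ((range R).filter (fun i => ν.rowLen (i+1) < ν.rowLen i)).image
        (fun i => (i, ν.rowLen i - 1)) := by
  ext x
  obtain ⟨i, j⟩ := x
  rw [hRem, isRemovable_iff, removable'_mk]
  simp only [Finset.mem_union, mem_image, mem_filter, mem_range, Prod.mk.injEq]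
  constructor
  · rintro ⟨hmem, h1, h2⟩
    have hclj : ν.colLen j = i + 1 := by
      have ha := YoungDiagram.mem_iff_lt_colLen.mp hmem
      have hb : ¬ (i+1 < ν.colLen j) := fun hh => h1 (YoungDiagram.mem_iff_lt_colLen.mpr hh)
      omega
    have hrli : ν.rowLen i = j + 1 := by
      have ha := YoungDiagram.mem_iff_lt_rowLen.mp hmem
      have hb : ¬ (j+1 < ν.rowLen i) := fun hh => h2 (YoungDiagram.mem_iff_lt_rowLen.mpr hh)
      omega
    have hcl2 : ν.colLen (j+1) ≤ i := by
      by_contra hh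
      exact h2 (YoungDiagram.mem_iff_lt_colLen.mpr (by omega))
    have hrl2 : ν.rowLen (i+1) ≤ j := by
      by_contra hh
      exact h1 (YoungDiagram.mem_iff_lt_rowLen.mpr (by omega))
    rcases lt_or_ge j C with hjC | hjC
    · exact Or.inl ⟨j, ⟨hjC, by omega⟩, by omega, rfl⟩
    · right
      have hiR : i < R := by
        by_contra hiR
        have hh : ((R : ℕ), C) ∈ ν := ν.up_left_mem (by omega) (by omega) hmem
        rw [YoungDiagram.mem_iff_lt_rowLen, hrl] at hh
        omega
      exact ⟨i, ⟨hiR, by omega⟩, rfl, by omega⟩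
  · rintro (⟨j', ⟨hj', hdrop⟩, heq1, rfl⟩ | ⟨i', ⟨hi', hdrop⟩, rfl, heq2⟩)
    · refine ⟨?_, ?_, ?_⟩
      · exact YoungDiagram.mem_iff_lt_colLen.mpr (by omega)
      · intro hmem; rw [YoungDiagram.mem_iff_lt_colLen] at hmem; omega
      · intro hmem; rw [YoungDiagram.mem_iff_lt_colLen] at hmem; omega
    · have hpos : 0 < ν.rowLen i' := by omega
      refine ⟨?_, ?_, ?_⟩
      · exact YoungDiagram.mem_iff_lt_rowLen.mpr (by omega)
      · intro hmem; rw [YoungDiagram.mem_iff_lt_rowLen] at hmem; omega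
      · intro hmem; rw [YoungDiagram.mem_iff_lt_rowLen] at hmem; omega

open Finset in
lemma add_eq (ν : YoungDiagram) (R C : ℕ) (hrl : ν.rowLen R = C) (hcl : ν.colLen C = R)
    (Add : Finset (ℕ × ℕ)) (hAdd : ∀ x, x ∈ Add ↔ IsAddable ν x) :
    Add.erase (R, C) = ((range C).filter (fun j => j = 0 ∨ ν.colLen j < ν.colLen (j-1))).image
        (fun j => (ν.colLen j, j))
      ∪ ((range R).filter (fun i => i = 0 ∨ ν.rowLen i < ν.rowLen (i-1))).image
        (fun i => (i, ν.rowLen i)) := by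
  ext x
  obtain ⟨i, j⟩ := x
  rw [Finset.mem_erase, hAdd, isAddable_iff, addable'_mk]
  simp only [Finset.mem_union, mem_image, mem_filter, mem_range, Prod.mk.injEq, Ne]
  constructor
  · rintro ⟨hne, hnm, h1, h2⟩
    have hrli : ν.rowLen i = j := by
      have ha : ν.rowLen i ≤ j := by
        by_contra hh
        exact hnm (YoungDiagram.mem_iff_lt_rowLen.mpr (by omega))
      rcases h2 with h0 | hmem'
      · omega
      · have := YoungDiagram.mem_iff_lt_rowLen.mp hmem'
        omega
    have hclj : ν.colLen j = i := by
      have ha : ν.colLen j ≤ i := by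
        by_contra hh
        exact hnm (YoungDiagram.mem_iff_lt_colLen.mpr (by omega))
      rcases h1 with h0 | hmem'
      · omega
      · have := YoungDiagram.mem_iff_lt_colLen.mp hmem'
        omega
    rcases lt_trichotomy i R with hiR | hiR | hiR
    · right
      refine ⟨i, ⟨hiR, ?_⟩, rfl, hrli⟩
      rcases h1 with h0 | hmem'
      · exact Or.inl h0
      · exact Or.inr (by have := YoungDiagram.mem_iff_lt_rowLen.mp hmem'; omega)
    · exfalso; apply hne; subst hiR; exact ⟨rfl, by omega⟩
    · left
      have hjC : j < C := by
        by_contra hh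
        have h3 := ν.colLen_anti C j (by omega)
        omega
      refine ⟨j, ⟨hjC, ?_⟩, hclj, rfl⟩
      rcases h2 with h0 | hmem'
      · exact Or.inl h0
      · exact Or.inr (by have := YoungDiagram.mem_iff_lt_colLen.mp hmem'; omega)
  · rintro (⟨j', ⟨hj', hcond⟩, heq1, rfl⟩ | ⟨i', ⟨hi', hcond⟩, rfl, heq2⟩)
    · refine ⟨fun h => by omega, ?_, ?_, ?_⟩
      · intro hmem; rw [YoungDiagram.mem_iff_lt_colLen] at hmem; omega
      · rcases Nat.eq_zero_or_pos (ν.colLen j') with h0 | hpos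
        · exact Or.inl (by omega)
        · exact Or.inr (YoungDiagram.mem_iff_lt_colLen.mpr (by omega))
      · rcases hcond with h0 | hdrop
        · exact Or.inl h0
        · exact Or.inr (YoungDiagram.mem_iff_lt_colLen.mpr (by omega))
    · refine ⟨fun h => by omega, ?_, ?_, ?_⟩
      · intro hmem; rw [YoungDiagram.mem_iff_lt_rowLen] at hmem; omega
      · rcases hcond with h0 | hdrop
        · exact Or.inl h0
        · exact Or.inr (YoungDiagram.mem_iff_lt_rowLen.mpr (by omega))
      · rcases Nat.eq_zero_or_pos (ν.rowLen i') with h0 | hpos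
        · exact Or.inl (by omega)
        · exact Or.inr (YoungDiagram.mem_iff_lt_rowLen.mpr (by omega))

open Finset in
lemma prod_rem (ν : YoungDiagram) (R C : ℕ) (hrl : ν.rowLen R = C) (hcl : ν.colLen C = R)
    (Rem : Finset (ℕ × ℕ)) (hRem : ∀ x, x ∈ Rem ↔ IsRemovable ν x) (F : ℕ × ℕ → K) :
    ∏ r ∈ Rem, F r
      = (∏ j ∈ (range C).filter (fun j => ν.colLen (j+1) < ν.colLen j), F (ν.colLen j - 1, j))
      * ∏ i ∈ (range R).filter (fun i => ν.rowLen (i+1) < ν.rowLen i), F (i, ν.rowLen i - 1) := by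
  rw [rem_eq ν R C hrl hcl Rem hRem, Finset.prod_union, Finset.prod_image, Finset.prod_image]
  · intro x hx y hy h; have := congrArg Prod.fst h; simpa using this
  · intro x hx y hy h; have := congrArg Prod.snd h; simpa using this
  · rw [Finset.disjoint_left]
    intro x hx1 hx2
    simp only [mem_image, mem_filter, mem_range] at hx1 hx2
    obtain ⟨j, ⟨hj, _⟩, rfl⟩ := hx1
    obtain ⟨i, ⟨hi, _⟩, heq⟩ := hx2
    have h2 := congrArg Prod.snd heq
    simp only at h2
    have h3 : C < ν.rowLen i :=
      YoungDiagram.mem_iff_lt_rowLen.mp (YoungDiagram.mem_iff_lt_colLen.mpr (by omega))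
    omega

open Finset in
lemma prod_add (ν : YoungDiagram) (R C : ℕ) (hrl : ν.rowLen R = C) (hcl : ν.colLen C = R)
    (Add : Finset (ℕ × ℕ)) (hAdd : ∀ x, x ∈ Add ↔ IsAddable ν x) (F : ℕ × ℕ → K) :
    ∏ a ∈ Add.erase (R, C), F a
      = (∏ j ∈ (range C).filter (fun j => j = 0 ∨ ν.colLen j < ν.colLen (j-1)), F (ν.colLen j, j))
      * ∏ i ∈ (range R).filter (fun i => i = 0 ∨ ν.rowLen i < ν.rowLen (i-1)), F (i, ν.rowLen i) := by
  rw [add_eq ν R C hrl hcl Add hAdd, Finset.prod_union, Finset.prod_image, Finset.prod_image]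
  · intro x hx y hy h; have := congrArg Prod.fst h; simpa using this
  · intro x hx y hy h; have := congrArg Prod.snd h; simpa using this
  · rw [Finset.disjoint_left]
    intro x hx1 hx2
    simp only [mem_image, mem_filter, mem_range] at hx1 hx2
    obtain ⟨j, ⟨hj, _⟩, rfl⟩ := hx1
    obtain ⟨i, ⟨hi, _⟩, heq⟩ := hx2
    have h2 := congrArg Prod.fst heq
    simp only at h2
    have h3 : R < ν.colLen j :=
      YoungDiagram.mem_iff_lt_colLen.mp (YoungDiagram.mem_iff_lt_rowLen.mpr (by omega))
    omega

open Finset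

/-- equality of Macdonald's row–column product formula for the
`e₁`-Pieri coefficient `d_{μν}` with its corner-weight formula. -/
theorem stmt_2 (ν : YoungDiagram) (ℓ : ℕ) (Rem Add : Finset (ℕ × ℕ))
    (hRem : ∀ x, x ∈ Rem ↔ IsRemovable ν x)
    (hAdd : ∀ x, x ∈ Add ↔ IsAddable ν x)
    (hℓ : Rem.card = ℓ)
    (c : ℕ × ℕ) (hc : IsAddable ν c)
    (μ : YoungDiagram) (hμ : μ.cells = insert c ν.cells) :
    (∏ s ∈ ν.cells.filter (fun s => s.1 = c.1),
        (q ^ arm ν s - t ^ (leg ν s + 1)) / (q ^ arm μ s - t ^ (leg μ s + 1))) *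
      (∏ s ∈ ν.cells.filter (fun s => s.2 = c.2),
        (t ^ leg ν s - q ^ (arm ν s + 1)) / (t ^ leg μ s - q ^ (arm μ s + 1))) =
    (w c)⁻¹ * (∏ r ∈ Rem, (1 - q * t * w r / w c)) /
      ∏ a ∈ Add.erase c, (1 - w a / w c) := by
  obtain ⟨R, C⟩ := c
  have hc' := (isAddable_iff ν (R, C)).mp hc
  rw [addable'_mk] at hc'
  obtain ⟨hcn, hup, hleft⟩ := hc'
  have hrl : ν.rowLen R = C := by
    apply rowLen_eq
    intro k
    constructor
    · intro hk
      by_contra hkC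
      exact hcn (ν.up_left_mem le_rfl (by omega) hk)
    · intro hk
      rcases hleft with h0 | hmem
      · omega
      · exact ν.up_left_mem le_rfl (by omega) hmem
  have hcl : ν.colLen C = R := by
    apply colLen_eq
    intro k
    constructor
    · intro hk
      by_contra hkR
      exact hcn (ν.up_left_mem (by omega) le_rfl hk)
    · intro hk
      rcases hup with h0 | hmem
      · omega
      · exact ν.up_left_mem (by omega) le_rfl hmem
  have hμmem : ∀ x : ℕ × ℕ, x ∈ μ ↔ x = (R, C) ∨ x ∈ ν := by
    intro x
    rw [← YoungDiagram.mem_cells, hμ, Finset.mem_insert, YoungDiagram.mem_cells]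
  have hμrlR : μ.rowLen R = C + 1 := by
    apply rowLen_eq
    intro k
    rw [hμmem]
    simp only [Prod.mk.injEq, YoungDiagram.mem_iff_lt_rowLen]
    constructor
    · rintro (⟨h1, h2⟩ | hmem)
      · omega
      · omega
    · intro hk
      rcases Nat.lt_or_ge k C with h | h
      · exact Or.inr (by omega)
      · exact Or.inl (by refine ⟨?_, ?_⟩ <;> first | trivial | omega)
  have hμclC : μ.colLen C = R + 1 := by
    apply colLen_eq
    intro k
    rw [hμmem]
    simp only [Prod.mk.injEq, YoungDiagram.mem_iff_lt_colLen]
    constructor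
    · rintro (⟨h1, h2⟩ | hmem)
      · omega
      · omega
    · intro hk
      rcases Nat.lt_or_ge k R with h | h
      · exact Or.inr (by omega)
      · exact Or.inl (by refine ⟨?_, ?_⟩ <;> first | trivial | omega)
  have hμrl : ∀ i, i ≠ R → μ.rowLen i = ν.rowLen i := by
    intro i hi
    apply rowLen_eq
    intro k
    rw [hμmem]
    simp only [Prod.mk.injEq, YoungDiagram.mem_iff_lt_rowLen]
    constructor
    · rintro (⟨h1, h2⟩ | hmem)
      · exact absurd h1 hi
      · exact hmem
    · exact fun h => Or.inr h
  have hμcl : ∀ j, j ≠ C → μ.colLen j = ν.colLen j := by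
    intro j hj
    apply colLen_eq
    intro k
    rw [hμmem]
    simp only [Prod.mk.injEq, YoungDiagram.mem_iff_lt_colLen]
    constructor
    · rintro (⟨h1, h2⟩ | hmem)
      · exact absurd h2 hj
      · exact hmem
    · exact fun h => Or.inr h
  -- row product
  have hrowset : ν.cells.filter (fun s => s.1 = (R,C).1) = (range C).image (fun j => (R, j)) := by
    ext x
    obtain ⟨a, b⟩ := x
    simp only [Finset.mem_filter, YoungDiagram.mem_cells, Finset.mem_image, Finset.mem_range,
      Prod.mk.injEq]
    constructor
    · rintro ⟨hmem, rfl⟩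
      exact ⟨b, by have := YoungDiagram.mem_iff_lt_rowLen.mp hmem; omega, rfl, rfl⟩
    · rintro ⟨j, hj, rfl, rfl⟩
      exact ⟨YoungDiagram.mem_iff_lt_rowLen.mpr (by omega), rfl⟩
  have hcolset : ν.cells.filter (fun s => s.2 = (R,C).2) = (range R).image (fun i => (i, C)) := by
    ext x
    obtain ⟨a, b⟩ := x
    simp only [Finset.mem_filter, YoungDiagram.mem_cells, Finset.mem_image, Finset.mem_range,
      Prod.mk.injEq]
    constructor
    · rintro ⟨hmem, rfl⟩
      exact ⟨a, by have := YoungDiagram.mem_iff_lt_colLen.mp hmem; omega, rfl, rfl⟩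
    · rintro ⟨i, hi, rfl, rfl⟩
      exact ⟨YoungDiagram.mem_iff_lt_colLen.mpr (by omega), rfl⟩
  have hrowprod : (∏ s ∈ ν.cells.filter (fun s => s.1 = (R,C).1),
        (q ^ arm ν s - t ^ (leg ν s + 1)) / (q ^ arm μ s - t ^ (leg μ s + 1)))
      = ∏ j ∈ range C, ((q^(C-1-j) - t^(ν.colLen j - R))/(q^(C-j) - t^(ν.colLen j - R))) := by
    rw [hrowset, Finset.prod_image (by intro x _ y _ h; simpa using congrArg Prod.snd h)]
    apply Finset.prod_congr rfl
    intro j hj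
    rw [Finset.mem_range] at hj
    have hmemν : (R, j) ∈ ν := YoungDiagram.mem_iff_lt_rowLen.mpr (by omega)
    have hmemμ : (R, j) ∈ μ := (hμmem _).mpr (Or.inr hmemν)
    have hRcol : R < ν.colLen j := YoungDiagram.mem_iff_lt_colLen.mp hmemν
    have e1 : arm ν (R, j) = C - 1 - j := by rw [arm_eq ν hmemν]; omega
    have e2 : leg ν (R, j) + 1 = ν.colLen j - R := by rw [leg_eq ν hmemν]; omega
    have e3 : arm μ (R, j) = C - j := by rw [arm_eq μ hmemμ]; omega
    have e4 : leg μ (R, j) + 1 = ν.colLen j - R := by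
      rw [leg_eq μ hmemμ, hμcl j (by omega)]; omega
    rw [e1, e2, e3, e4]
  have hcolprod : (∏ s ∈ ν.cells.filter (fun s => s.2 = (R,C).2),
        (t ^ leg ν s - q ^ (arm ν s + 1)) / (t ^ leg μ s - q ^ (arm μ s + 1)))
      = ∏ i ∈ range R, ((t^(R-1-i) - q^(ν.rowLen i - C))/(t^(R-i) - q^(ν.rowLen i - C))) := by
    rw [hcolset, Finset.prod_image (by intro x _ y _ h; simpa using congrArg Prod.fst h)]
    apply Finset.prod_congr rfl
    intro i hi
    rw [Finset.mem_range] at hi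
    have hmemν : (i, C) ∈ ν := YoungDiagram.mem_iff_lt_colLen.mpr (by omega)
    have hmemμ : (i, C) ∈ μ := (hμmem _).mpr (Or.inr hmemν)
    have hCrow : C < ν.rowLen i := YoungDiagram.mem_iff_lt_rowLen.mp hmemν
    have e1 : leg ν (i, C) = R - 1 - i := by rw [leg_eq ν hmemν]; omega
    have e2 : arm ν (i, C) + 1 = ν.rowLen i - C := by rw [arm_eq ν hmemν]; omega
    have e3 : leg μ (i, C) = R - i := by rw [leg_eq μ hmemμ]; omega
    have e4 : arm μ (i, C) + 1 = ν.rowLen i - C := by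
      rw [arm_eq μ hmemμ, hμrl i (by omega)]; omega
    rw [e1, e2, e3, e4]
  have hrowEval := rowEval q t q_ne_zero t_ne_zero qt_sub_ne R C ν.colLen
    (fun j _ => ν.colLen_anti j (j+1) (Nat.le_succ j))
    (fun j hj => YoungDiagram.mem_iff_lt_colLen.mp
      (YoungDiagram.mem_iff_lt_rowLen.mpr (show j < ν.rowLen R by omega)))
    hcl
  have hcolEval := rowEval t q t_ne_zero q_ne_zero tq_sub_ne C R ν.rowLen
    (fun i _ => ν.rowLen_anti i (i+1) (Nat.le_succ i))
    (fun i hi => YoungDiagram.mem_iff_lt_rowLen.mp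
      (YoungDiagram.mem_iff_lt_colLen.mpr (show i < ν.colLen C by omega)))
    hrl
  rw [hrowprod, hcolprod, hrowEval, hcolEval,
    prod_rem ν R C hrl hcl Rem hRem (fun r => 1 - q * t * w r / w (R, C)),
    prod_add ν R C hrl hcl Add hAdd (fun a => 1 - w a / w (R, C))]
  simp only [w]
  have hN2 : (∏ i ∈ (range R).filter (fun i => ν.rowLen (i+1) < ν.rowLen i),
        (1 - q * t * (t ^ i * q ^ (ν.rowLen i - 1)) / (t ^ R * q ^ C)))
      = ∏ i ∈ (range R).filter (fun i => ν.rowLen (i+1) < ν.rowLen i),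
        (1 - t * q * (q ^ (ν.rowLen i - 1) * t ^ i) / (q ^ C * t ^ R)) :=
    Finset.prod_congr rfl (fun i _ => by ring)
  have hD2 : (∏ i ∈ (range R).filter (fun i => i = 0 ∨ ν.rowLen i < ν.rowLen (i-1)),
        (1 - t ^ i * q ^ (ν.rowLen i) / (t ^ R * q ^ C)))
      = ∏ i ∈ (range R).filter (fun i => i = 0 ∨ ν.rowLen i < ν.rowLen (i-1)),
        (1 - q ^ (ν.rowLen i) * t ^ i / (q ^ C * t ^ R)) :=
    Finset.prod_congr rfl (fun i _ => by ring)
  rw [hN2, hD2]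
  rw [div_mul_div_comm, inv_mul_eq_div, div_div]
  congr 1
  ring

end
end

section
/- Let ν be a partition, fix an addable corner of ν at position (α,β) (row α, column β), so its weight is A = t^α·q^β, and let μ = ν together with that cell. Then in ℚ(q,t): ∏_{s∈C_{μν}} (t^{l_ν(s)}−q^{a_ν(s)+1})/(t^{l_μ(s)}−q^{a_μ(s)+1}) = t^{−α} · ∏_{R}(A − qt·R) / ∏_{A'}(A − A'), where the numerator product runs over the weights R of the removable corners of ν whose row index is strictly less than α, the denominator product runs over the weights A' of the addable corners of ν whose row index is strictly less than α, and these two sets of corners have equal cardinality. -/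
open scoped Classical
open PowerSeries

noncomputable section

/-! ### Auxiliary lemmas -/

lemma tq_pow_eq {a b : ℕ} (h : t ^ a = q ^ b) : a = 0 ∧ b = 0 := by
  rw [q, t, ← map_pow, ← map_pow] at h
  have h2 : (MvPolynomial.X 1 : MvPolynomial (Fin 2) ℚ) ^ a = MvPolynomial.X 0 ^ b :=
    IsFractionRing.injective _ _ h
  have hb : b = 0 := by
    by_contra hb0
    have := congrArg (MvPolynomial.eval fun i : Fin 2 => if i = 0 then (0:ℚ) else 1) h2
    simp [zero_pow hb0] at this
  subst hb
  have ha : a = 0 := by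
    by_contra ha0
    have := congrArg (MvPolynomial.eval fun _ : Fin 2 => (0:ℚ)) h2
    simp [zero_pow ha0] at this
  exact ⟨ha, rfl⟩

lemma tq_ne {a b : ℕ} (ha : 0 < a) : t ^ a - q ^ b ≠ 0 := by
  rw [sub_ne_zero]
  intro h
  exact absurd (tq_pow_eq h).1 (by omega)

lemma tq_ne' {a i c : ℕ} (hi : i ≤ a) (hc : 0 < c) : t ^ a - t ^ i * q ^ c ≠ 0 := by
  rw [sub_ne_zero]
  intro h
  have h2 : t ^ i * t ^ (a - i) = t ^ i * q ^ c := by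
    rw [← pow_add, show i + (a - i) = a by omega]
    exact h
  have h3 : t ^ (a - i) = q ^ c := mul_left_cancel₀ (pow_ne_zero _ t_ne_zero) h2
  exact absurd (tq_pow_eq h3).2 (by omega)

open Finset

lemma prod_filter_range_succ {M : Type*} [CommMonoid M] (n : ℕ) (p : ℕ → Prop) [DecidablePred p]
    (F : ℕ → M) :
    ∏ i ∈ (range (n+1)).filter p, F i =
      (∏ i ∈ (range n).filter (fun i => p (i+1)), F (i+1)) * (if p 0 then F 0 else 1) := by
  rw [prod_filter, prod_filter, Finset.prod_range_succ']

lemma card_filter_range_succ (n : ℕ) (p : ℕ → Prop) [DecidablePred p] :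
    ((range (n+1)).filter p).card =
      ((range n).filter (fun i => p (i+1))).card + (if p 0 then 1 else 0) := by
  rw [Finset.card_filter, Finset.card_filter, Finset.sum_range_succ']

/-- The key algebraic identity, by induction on the number of rows below the added cell. -/
lemma core (n : ℕ) : ∀ (e : ℕ → ℕ), (∀ i < n, e (i+1) ≤ e i) → (∀ i < n, 1 ≤ e i) → e n = 0 →
    ((range n).filter (fun i => e (i+1) < e i)).card
      = ((range n).filter (fun i => i = 0 ∨ e i < e (i-1))).card ∧
    ∏ i ∈ range n, (t^(n-(i+1)) - q^(e i)) / (t^(n-i) - q^(e i)) =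
      (t^n)⁻¹ * (∏ i ∈ (range n).filter (fun i => e (i+1) < e i), (t^n - t^(i+1) * q^(e i))) /
        (∏ i ∈ (range n).filter (fun i => i = 0 ∨ e i < e (i-1)), (t^n - t^i * q^(e i))) := by
  induction n with
  | zero => intro e _ _ _; simp
  | succ n ih =>
    intro e hmono hpos hzero
    obtain ⟨ihc, ihp⟩ := ih (fun i => e (i+1)) (fun i hi => hmono (i+1) (by omega))
      (fun i hi => hpos (i+1) (by omega)) hzero
    have hU'eq : (range n).filter (fun i => i = 0 ∨ e (i+1) < e (i-1+1))
        = (range n).filter (fun i => i = 0 ∨ e (i+1) < e i) := by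
      apply Finset.filter_congr
      intro i _
      by_cases hi : i = 0
      · simp [hi]
      · rw [show i-1+1 = i by omega]
    rw [hU'eq] at ihc ihp
    set D' : Finset ℕ := (range n).filter (fun i => e (i+1+1) < e (i+1)) with hD'
    set U' : Finset ℕ := (range n).filter (fun i => i = 0 ∨ e (i+1) < e i) with hU'
    set A : K := ∏ i ∈ D', (t^n - t^(i+1) * q^(e (i+1))) with hA
    set a : K := t^n - q^(e 0) with ha
    set b : K := t^(n+1) - q^(e 0) with hb
    -- LHS peel
    have hL : ∏ i ∈ range (n+1), (t^(n+1-(i+1)) - q^(e i)) / (t^(n+1-i) - q^(e i)) =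
        (∏ i ∈ range n, (t^(n-(i+1)) - q^(e (i+1))) / (t^(n-i) - q^(e (i+1)))) * (a / b) := by
      rw [Finset.prod_range_succ']
      congr 1
      apply Finset.prod_congr rfl
      intro i _
      rw [show n+1-(i+1+1) = n-(i+1) by omega, show n+1-(i+1) = n-i by omega]
    -- numerator peel
    have hN : ∏ i ∈ (range (n+1)).filter (fun i => e (i+1) < e i), (t^(n+1) - t^(i+1) * q^(e i)) =
        (t ^ D'.card * A) * (if e 1 < e 0 then t^(n+1) - t^1 * q^(e 0) else 1) := by
      rw [prod_filter_range_succ]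
      congr 1
      rw [hA, ← Finset.prod_const, ← Finset.prod_mul_distrib]
      apply Finset.prod_congr rfl
      intro i _
      ring
    -- generic shift for denominators
    have hshift : ∀ (s : Finset ℕ),
        ∏ i ∈ s, (t^(n+1) - t^(i+1) * q^(e (i+1))) =
          t ^ s.card * ∏ i ∈ s, (t^n - t^i * q^(e (i+1))) := by
      intro s
      rw [← Finset.prod_const, ← Finset.prod_mul_distrib]
      apply Finset.prod_congr rfl
      intro i _
      ring
    -- denominator peel
    have hDen : ∏ i ∈ (range (n+1)).filter (fun i => i = 0 ∨ e i < e (i-1)),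
          (t^(n+1) - t^i * q^(e i)) =
        (∏ i ∈ (range n).filter (fun i => e (i+1) < e i), (t^(n+1) - t^(i+1) * q^(e (i+1)))) * b := by
      rw [prod_filter_range_succ,
        if_pos (show (0:ℕ) = 0 ∨ e 0 < e (0-1) from Or.inl rfl),
        show t^(n+1) - t^0 * q^(e 0) = b by rw [hb]; ring]
      congr 1
      apply Finset.prod_congr
      · apply Finset.filter_congr
        intro i _
        simp
      · intro i _; rfl
    -- cards peel
    have hcN : ((range (n+1)).filter (fun i => e (i+1) < e i)).card =
        D'.card + (if e 1 < e 0 then 1 else 0) := by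
      rw [card_filter_range_succ]
    have hcD : ((range (n+1)).filter (fun i => i = 0 ∨ e i < e (i-1))).card =
        ((range n).filter (fun i => e (i+1) < e i)).card + 1 := by
      rw [card_filter_range_succ, if_pos (show (0:ℕ) = 0 ∨ e 0 < e (0-1) from Or.inl rfl)]
      congr 2
      apply Finset.filter_congr
      intro i _
      simp
    have hbne : b ≠ 0 := tq_ne (by omega)
    by_cases h01 : e 1 < e 0
    · -- descent at 0
      have hUc1 : (range n).filter (fun i => e (i+1) < e i) = U' := by
        apply Finset.filter_congr
        intro i _
        by_cases hi : i = 0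
        · subst hi; simp [h01]
        · simp [hi]
      set B : K := ∏ i ∈ U', (t^n - t^i * q^(e (i+1))) with hB
      have hBne : B ≠ 0 := by
        rw [hB]
        apply Finset.prod_ne_zero_iff.mpr
        intro i hi
        rw [hU', Finset.mem_filter, Finset.mem_range] at hi
        exact tq_ne' (by omega) (hpos (i+1) (by omega))
      constructor
      · rw [hcN, hcD, hUc1, if_pos h01, ihc]
      · rw [hL, ihp, hN, hDen, hUc1, hshift U', if_pos h01, ihc]
        have h1 : t^(n+1) - t^1 * q^(e 0) = t * a := by rw [ha]; ring
        rw [h1]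
        rw [← hB]
        field_simp [t_ne_zero]
        ring
    · -- no descent at 0
      have he10 : e 1 = e 0 := by
        have h10 : e 1 ≤ e 0 := by simpa using hmono 0 (by omega)
        omega
      have hn1 : 1 ≤ n := by
        by_contra hn
        have h0 : n = 0 := by omega
        subst h0
        have hz : e 1 = 0 := by simpa using hzero
        have := hpos 0 (by omega)
        exact h01 (by omega)
      set R : Finset ℕ := (range n).filter (fun i => e (i+1) < e i) with hR
      have h0R : 0 ∉ R := by
        rw [hR, Finset.mem_filter]
        rintro ⟨-, h⟩
        exact h01 h
      have hUins : U' = insert 0 R := by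
        ext i
        rw [hU', hR, Finset.mem_insert, Finset.mem_filter, Finset.mem_filter, Finset.mem_range]
        constructor
        · rintro ⟨hi, h | h⟩
          · exact Or.inl h
          · exact Or.inr ⟨hi, h⟩
        · rintro (h | ⟨hi, h⟩)
          · exact ⟨by omega, Or.inl h⟩
          · exact ⟨hi, Or.inr h⟩
      set P : K := ∏ i ∈ R, (t^n - t^i * q^(e (i+1))) with hP
      have hBins : ∏ i ∈ U', (t^n - t^i * q^(e (i+1))) = a * P := by
        rw [hUins, Finset.prod_insert h0R, hP, ha]
        congr 2
        · simp [he10]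
      have hUcard : U'.card = R.card + 1 := by
        rw [hUins, Finset.card_insert_of_notMem h0R]
      have hPne : P ≠ 0 := by
        rw [hP]
        apply Finset.prod_ne_zero_iff.mpr
        intro i hi
        rw [hR, Finset.mem_filter, Finset.mem_range] at hi
        exact tq_ne' (by omega) (hpos (i+1) (by omega))
      have hane : a ≠ 0 := tq_ne (by omega)
      constructor
      · rw [hcN, hcD, if_neg h01, ihc, hUcard]
      · rw [hL, ihp, hN, hDen, hshift R, if_neg h01, hBins, ihc, hUcard]
        rw [← hP]
        field_simp [t_ne_zero]
        ring

/-! ### Characterization of removable/addable corners -/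

lemma isRemovable_iff_s4 (ν : YoungDiagram) (i c : ℕ) :
    IsRemovable ν (i, c) ↔ (i, c) ∈ ν ∧ (i, c+1) ∉ ν ∧ (i+1, c) ∉ ν := by
  constructor
  · rintro ⟨hm, hls⟩
    refine ⟨hm, ?_, ?_⟩
    · intro hmem
      have h2 : ((i, c+1) : ℕ × ℕ) ∈ (↑(ν.cells.erase (i, c)) : Set (ℕ × ℕ)) := by
        simp only [Finset.coe_erase, Set.mem_diff, Finset.mem_coe, YoungDiagram.mem_cells,
          Set.mem_singleton_iff]
        exact ⟨hmem, by simp⟩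
      have h3 := hls (show ((i,c) : ℕ × ℕ) ≤ (i, c+1) from Prod.mk_le_mk.mpr ⟨le_refl i, by omega⟩) h2
      simp only [Finset.coe_erase, Set.mem_diff, Set.mem_singleton_iff] at h3
      exact h3.2 trivial
    · intro hmem
      have h2 : ((i+1, c) : ℕ × ℕ) ∈ (↑(ν.cells.erase (i, c)) : Set (ℕ × ℕ)) := by
        simp only [Finset.coe_erase, Set.mem_diff, Finset.mem_coe, YoungDiagram.mem_cells,
          Set.mem_singleton_iff]
        exact ⟨hmem, by simp⟩
      have h3 := hls (show ((i,c) : ℕ × ℕ) ≤ (i+1, c) from Prod.mk_le_mk.mpr ⟨by omega, le_refl c⟩) h2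
      simp only [Finset.coe_erase, Set.mem_diff, Set.mem_singleton_iff] at h3
      exact h3.2 trivial
  · rintro ⟨hm, h1, h2⟩
    refine ⟨hm, ?_⟩
    intro x y hyx hx
    obtain ⟨x1, x2⟩ := x
    obtain ⟨y1, y2⟩ := y
    simp only [Finset.coe_erase, Set.mem_diff, Finset.mem_coe, Set.mem_singleton_iff,
      YoungDiagram.mem_cells] at hx ⊢
    obtain ⟨hxν, hxne⟩ := hx
    rw [Prod.mk_le_mk] at hyx
    refine ⟨ν.up_left_mem hyx.1 hyx.2 hxν, ?_⟩
    intro heq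
    rw [Prod.mk.injEq] at heq hxne
    rcases Nat.lt_or_ge c x2 with h | h
    · exact h1 (ν.up_left_mem (by omega) (by omega) hxν)
    · exact h2 (ν.up_left_mem (by omega) (by omega) hxν)

lemma isAddable_iff_s4 (ν : YoungDiagram) (i c : ℕ) :
    IsAddable ν (i, c) ↔ (i, c) ∉ ν ∧ (c = 0 ∨ (i, c-1) ∈ ν) ∧ (i = 0 ∨ (i-1, c) ∈ ν) := by
  constructor
  · rintro ⟨hm, hls⟩
    refine ⟨hm, ?_, ?_⟩
    · rcases Nat.eq_zero_or_pos c with h | h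
      · exact Or.inl h
      · right
        have h2 : ((i, c) : ℕ × ℕ) ∈ (↑(insert (i, c) ν.cells) : Set (ℕ × ℕ)) := by simp
        have h3 := hls (show ((i, c-1) : ℕ × ℕ) ≤ (i, c) from Prod.mk_le_mk.mpr ⟨le_refl i, by omega⟩) h2
        simp only [Finset.coe_insert, Set.mem_insert_iff, Finset.mem_coe,
          YoungDiagram.mem_cells, Prod.ext_iff] at h3
        rcases h3 with h3 | h3
        · omega
        · exact h3
    · rcases Nat.eq_zero_or_pos i with h | h
      · exact Or.inl h
      · right
        have h2 : ((i, c) : ℕ × ℕ) ∈ (↑(insert (i, c) ν.cells) : Set (ℕ × ℕ)) := by simp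
        have h3 := hls (show ((i-1, c) : ℕ × ℕ) ≤ (i, c) from Prod.mk_le_mk.mpr ⟨by omega, le_refl c⟩) h2
        simp only [Finset.coe_insert, Set.mem_insert_iff, Finset.mem_coe,
          YoungDiagram.mem_cells, Prod.ext_iff] at h3
        rcases h3 with h3 | h3
        · omega
        · exact h3
  · rintro ⟨hm, h1, h2⟩
    refine ⟨hm, ?_⟩
    intro x y hyx hx
    obtain ⟨x1, x2⟩ := x
    obtain ⟨y1, y2⟩ := y
    simp only [Finset.coe_insert, Set.mem_insert_iff, Finset.mem_coe,
      YoungDiagram.mem_cells] at hx ⊢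
    rw [Prod.mk_le_mk] at hyx
    rcases hx with hx | hx
    · rw [Prod.mk.injEq] at hx
      by_cases hy : y1 = i ∧ y2 = c
      · exact Or.inl (by rw [Prod.mk.injEq]; exact hy)
      · right
        rw [not_and_or] at hy
        rcases Nat.lt_or_ge y2 c with h | h
        · rcases h1 with h1 | h1
          · omega
          · exact ν.up_left_mem (by omega) (by omega) h1
        · rcases h2 with h2 | h2
          · omega
          · exact ν.up_left_mem (by omega) (by omega) h2
    · exact Or.inr (ν.up_left_mem hyx.1 hyx.2 hx)

lemma isRemovable_iff' (ν : YoungDiagram) (i c : ℕ) :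
    IsRemovable ν (i, c) ↔ c + 1 = ν.rowLen i ∧ ν.rowLen (i+1) < ν.rowLen i := by
  rw [isRemovable_iff_s4]
  simp only [YoungDiagram.mem_iff_lt_rowLen]
  omega

lemma isAddable_iff' (ν : YoungDiagram) (i c : ℕ) :
    IsAddable ν (i, c) ↔ c = ν.rowLen i ∧ (i = 0 ∨ ν.rowLen i < ν.rowLen (i-1)) := by
  rw [isAddable_iff_s4]
  simp only [YoungDiagram.mem_iff_lt_rowLen]
  omega

lemma pair_fst_inj {h : ℕ → ℕ} : Function.Injective (fun i => ((i, h i) : ℕ × ℕ)) := by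
  intro a b hab
  simpa using congrArg Prod.fst hab

lemma pair_snd_inj {i0 : ℕ} : Function.Injective (fun j => ((i0, j) : ℕ × ℕ)) := by
  intro a b hab
  simpa using congrArg Prod.snd hab

lemma prod_image_pair {g : ℕ × ℕ → K} {s : Finset ℕ} (h : ℕ → ℕ) :
    ∏ x ∈ s.image (fun i => (i, h i)), g x = ∏ i ∈ s, g (i, h i) :=
  Finset.prod_image (fun x _ y _ hxy => pair_fst_inj hxy)

lemma card_image_pair (h : ℕ → ℕ) (s : Finset ℕ) :
    (s.image (fun i => (i, h i))).card = s.card :=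
  Finset.card_image_of_injective _ pair_fst_inj

/-- the column-product part of the Pieri coefficient `d_{μν}` in terms of the
corners of `ν` with row index strictly less than that of the added cell. -/
theorem stmt_4 (ν : YoungDiagram) (Rem Add : Finset (ℕ × ℕ))
    (hRem : ∀ x, x ∈ Rem ↔ IsRemovable ν x)
    (hAdd : ∀ x, x ∈ Add ↔ IsAddable ν x)
    (α β : ℕ) (hc : IsAddable ν (α, β))
    (μ : YoungDiagram) (hμ : μ.cells = insert (α, β) ν.cells) :
    (Rem.filter fun r => r.1 < α).card = (Add.filter fun a => a.1 < α).card ∧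
    (∏ s ∈ ν.cells.filter (fun s => s.2 = β),
        (t ^ leg ν s - q ^ (arm ν s + 1)) / (t ^ leg μ s - q ^ (arm μ s + 1))) =
      (t ^ α)⁻¹ *
        (∏ r ∈ Rem.filter (fun r => r.1 < α), (w (α, β) - q * t * w r)) /
        (∏ a ∈ Add.filter (fun a => a.1 < α), (w (α, β) - w a)) := by
  obtain ⟨hcne, hcls⟩ := hc
  have hb1 : ∀ i, i < α → (i, β) ∈ ν := by
    intro i hi
    have h2 : ((α, β) : ℕ × ℕ) ∈ (↑(insert (α, β) ν.cells) : Set (ℕ × ℕ)) := by simp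
    have h3 := hcls (show ((i, β) : ℕ × ℕ) ≤ (α, β) from Prod.mk_le_mk.mpr ⟨by omega, le_refl β⟩) h2
    simp only [Finset.coe_insert, Set.mem_insert_iff, Finset.mem_coe, YoungDiagram.mem_cells,
      Prod.mk.injEq] at h3
    rcases h3 with h3 | h3
    · omega
    · exact h3
  have hb3 : ∀ j, j < β → (α, j) ∈ ν := by
    intro j hj
    have h2 : ((α, β) : ℕ × ℕ) ∈ (↑(insert (α, β) ν.cells) : Set (ℕ × ℕ)) := by simp
    have h3 := hcls (show ((α, j) : ℕ × ℕ) ≤ (α, β) from Prod.mk_le_mk.mpr ⟨le_refl α, by omega⟩) h2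
    simp only [Finset.coe_insert, Set.mem_insert_iff, Finset.mem_coe, YoungDiagram.mem_cells,
      Prod.mk.injEq] at h3
    rcases h3 with h3 | h3
    · omega
    · exact h3
  have hfα : ν.rowLen α = β := by
    have hle : ν.rowLen α ≤ β := by
      by_contra h
      exact hcne (YoungDiagram.mem_iff_lt_rowLen.mpr (by omega))
    rcases Nat.eq_zero_or_pos β with h0 | h0
    · omega
    · have := YoungDiagram.mem_iff_lt_rowLen.mp (hb3 (β - 1) (by omega))
      omega
  have hfge : ∀ i, i < α → β < ν.rowLen i := fun i hi =>
    YoungDiagram.mem_iff_lt_rowLen.mp (hb1 i hi)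
  have hβν : ∀ i, ((i, β) ∈ ν ↔ i < α) := by
    intro i
    constructor
    · intro h
      have h1 := YoungDiagram.mem_iff_lt_rowLen.mp h
      by_contra hge
      have := ν.rowLen_anti α i (by omega)
      omega
    · exact hb1 i
  have hβμ : ∀ i, ((i, β) ∈ μ ↔ i < α + 1) := by
    intro i
    rw [← YoungDiagram.mem_cells, hμ, Finset.mem_insert, YoungDiagram.mem_cells, Prod.mk.injEq]
    constructor
    · rintro (⟨h, -⟩ | h)
      · omega
      · have := (hβν i).mp h; omega
    · intro h
      rcases Nat.lt_or_ge i α with h' | h'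
      · exact Or.inr ((hβν i).mpr h')
      · exact Or.inl ⟨by omega, rfl⟩
  -- the cells of the column of the added box
  have hcol : ν.cells.filter (fun s => s.2 = β) = (Finset.range α).image (fun i => (i, β)) := by
    ext x
    obtain ⟨i, j⟩ := x
    simp only [Finset.mem_filter, Finset.mem_image, Finset.mem_range, YoungDiagram.mem_cells,
      Prod.mk.injEq]
    constructor
    · rintro ⟨hm, rfl⟩
      exact ⟨i, (hβν i).mp hm, rfl, rfl⟩
    · rintro ⟨k, hk, rfl, rfl⟩
      exact ⟨(hβν k).mpr hk, rfl⟩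
  -- legs and arms
  have hlegν : ∀ i, i < α → leg ν (i, β) = α - (i + 1) := by
    intro i hi
    have hset : ν.cells.filter (fun d => d.2 = ((i:ℕ), β).2 ∧ ((i:ℕ), β).1 < d.1)
        = (Finset.Ico (i+1) α).image (fun k => (k, β)) := by
      ext x
      obtain ⟨a, b⟩ := x
      simp only [Finset.mem_filter, Finset.mem_image, Finset.mem_Ico, YoungDiagram.mem_cells,
        Prod.mk.injEq]
      constructor
      · rintro ⟨hm, rfl, hlt⟩
        exact ⟨a, ⟨by omega, (hβν a).mp hm⟩, rfl, rfl⟩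
      · rintro ⟨k, ⟨hk1, hk2⟩, rfl, rfl⟩
        exact ⟨(hβν k).mpr hk2, rfl, by omega⟩
    rw [leg, hset, Finset.card_image_of_injective _ pair_fst_inj, Nat.card_Ico]
  have hlegμ : ∀ i, i < α → leg μ (i, β) = α - i := by
    intro i hi
    have hset : μ.cells.filter (fun d => d.2 = ((i:ℕ), β).2 ∧ ((i:ℕ), β).1 < d.1)
        = (Finset.Ico (i+1) (α+1)).image (fun k => (k, β)) := by
      ext x
      obtain ⟨a, b⟩ := x
      simp only [Finset.mem_filter, Finset.mem_image, Finset.mem_Ico, YoungDiagram.mem_cells,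
        Prod.mk.injEq]
      constructor
      · rintro ⟨hm, rfl, hlt⟩
        exact ⟨a, ⟨by omega, (hβμ a).mp hm⟩, rfl, rfl⟩
      · rintro ⟨k, ⟨hk1, hk2⟩, rfl, rfl⟩
        exact ⟨(hβμ k).mpr hk2, rfl, by omega⟩
    rw [leg, hset, Finset.card_image_of_injective _ pair_fst_inj, Nat.card_Ico]
    omega
  have harmν : ∀ i, i < α → arm ν (i, β) = ν.rowLen i - (β + 1) := by
    intro i hi
    have hset : ν.cells.filter (fun d => d.1 = ((i:ℕ), β).1 ∧ ((i:ℕ), β).2 < d.2)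
        = (Finset.Ico (β+1) (ν.rowLen i)).image (fun j => (i, j)) := by
      ext x
      obtain ⟨a, b⟩ := x
      simp only [Finset.mem_filter, Finset.mem_image, Finset.mem_Ico, YoungDiagram.mem_cells,
        Prod.mk.injEq]
      constructor
      · rintro ⟨hm, rfl, hlt⟩
        exact ⟨b, ⟨by omega, YoungDiagram.mem_iff_lt_rowLen.mp hm⟩, rfl, rfl⟩
      · rintro ⟨k, ⟨hk1, hk2⟩, rfl, rfl⟩
        exact ⟨YoungDiagram.mem_iff_lt_rowLen.mpr hk2, rfl, by omega⟩
    rw [arm, hset, Finset.card_image_of_injective _ pair_snd_inj, Nat.card_Ico]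
  have harmμ : ∀ i, i < α → arm μ (i, β) = arm ν (i, β) := by
    intro i hi
    rw [arm, arm, hμ, Finset.filter_insert, if_neg]
    intro hcontra
    simp at hcontra
  have harm1 : ∀ i, i < α → arm ν (i, β) + 1 = ν.rowLen i - β := by
    intro i hi
    have := hfge i hi
    rw [harmν i hi]
    omega
  -- rewrite the left-hand side product
  have hLHS : (∏ s ∈ ν.cells.filter (fun s => s.2 = β),
        (t ^ leg ν s - q ^ (arm ν s + 1)) / (t ^ leg μ s - q ^ (arm μ s + 1)))
      = ∏ i ∈ Finset.range α,
          (t^(α-(i+1)) - q^(ν.rowLen i - β)) / (t^(α-i) - q^(ν.rowLen i - β)) := by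
    rw [hcol, prod_image_pair (fun _ => β)]
    apply Finset.prod_congr rfl
    intro i hi
    rw [Finset.mem_range] at hi
    rw [hlegν i hi, hlegμ i hi, harmμ i hi, harm1 i hi]
  -- corner sets
  have hRemEq : Rem.filter (fun r => r.1 < α)
      = ((Finset.range α).filter (fun i => ν.rowLen (i+1) < ν.rowLen i)).image
          (fun i => (i, ν.rowLen i - 1)) := by
    ext x
    obtain ⟨i, c⟩ := x
    simp only [Finset.mem_filter, Finset.mem_image, Finset.mem_range, hRem, Prod.mk.injEq]
    rw [isRemovable_iff']
    constructor
    · rintro ⟨⟨h1, h2⟩, hlt⟩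
      exact ⟨i, ⟨hlt, h2⟩, rfl, by omega⟩
    · rintro ⟨k, ⟨hk, hdesc⟩, rfl, rfl⟩
      exact ⟨⟨by omega, hdesc⟩, hk⟩
  have hAddEq : Add.filter (fun a => a.1 < α)
      = ((Finset.range α).filter (fun i => i = 0 ∨ ν.rowLen i < ν.rowLen (i-1))).image
          (fun i => (i, ν.rowLen i)) := by
    ext x
    obtain ⟨i, c⟩ := x
    simp only [Finset.mem_filter, Finset.mem_image, Finset.mem_range, hAdd, Prod.mk.injEq]
    rw [isAddable_iff']
    constructor
    · rintro ⟨⟨h1, h2⟩, hlt⟩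
      exact ⟨i, ⟨hlt, h2⟩, rfl, h1.symm⟩
    · rintro ⟨k, ⟨hk, hor⟩, rfl, rfl⟩
      exact ⟨⟨rfl, hor⟩, hk⟩
  -- transform the corner products
  have hprodR : ∏ x ∈ ((Finset.range α).filter (fun i => ν.rowLen (i+1) < ν.rowLen i)).image
        (fun i => (i, ν.rowLen i - 1)), (w (α, β) - q * t * w x)
      = (q^β)^(((Finset.range α).filter (fun i => ν.rowLen (i+1) < ν.rowLen i)).card) *
        ∏ i ∈ (Finset.range α).filter (fun i => ν.rowLen (i+1) < ν.rowLen i),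
          (t^α - t^(i+1) * q^(ν.rowLen i - β)) := by
    rw [prod_image_pair (fun i => ν.rowLen i - 1), ← Finset.prod_const,
      ← Finset.prod_mul_distrib]
    apply Finset.prod_congr rfl
    intro i hi
    rw [Finset.mem_filter, Finset.mem_range] at hi
    obtain ⟨k, hk⟩ : ∃ k, ν.rowLen i = β + k + 1 := ⟨ν.rowLen i - β - 1, by have := hfge i hi.1; omega⟩
    simp only [w]
    rw [hk, show β + k + 1 - 1 = β + k by omega, show β + k + 1 - β = k + 1 by omega]
    ring
  have hprodA : ∏ x ∈ ((Finset.range α).filter (fun i => i = 0 ∨ ν.rowLen i < ν.rowLen (i-1))).image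
        (fun i => (i, ν.rowLen i)), (w (α, β) - w x)
      = (q^β)^(((Finset.range α).filter (fun i => i = 0 ∨ ν.rowLen i < ν.rowLen (i-1))).card) *
        ∏ i ∈ (Finset.range α).filter (fun i => i = 0 ∨ ν.rowLen i < ν.rowLen (i-1)),
          (t^α - t^i * q^(ν.rowLen i - β)) := by
    rw [prod_image_pair ν.rowLen, ← Finset.prod_const,
      ← Finset.prod_mul_distrib]
    apply Finset.prod_congr rfl
    intro i hi
    rw [Finset.mem_filter, Finset.mem_range] at hi
    obtain ⟨k, hk⟩ : ∃ k, ν.rowLen i = β + k := ⟨ν.rowLen i - β, by have := hfge i hi.1; omega⟩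
    simp only [w]
    rw [hk, show β + k - β = k by omega]
    ring
  -- apply the core identity
  obtain ⟨hcard, hprod⟩ := core α (fun i => ν.rowLen i - β)
    (fun i hi => Nat.sub_le_sub_right (ν.rowLen_anti i (i+1) (by omega)) β)
    (fun i hi => by have := hfge i hi; show 1 ≤ ν.rowLen i - β; omega)
    (show (fun i => ν.rowLen i - β) α = 0 by show ν.rowLen α - β = 0; omega)
  have hDconv : (Finset.range α).filter (fun i => ν.rowLen (i+1) - β < ν.rowLen i - β)
      = (Finset.range α).filter (fun i => ν.rowLen (i+1) < ν.rowLen i) := by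
    apply Finset.filter_congr
    intro i hi
    rw [Finset.mem_range] at hi
    have h1 := hfge i hi
    have h2 : β ≤ ν.rowLen (i+1) := by
      rcases Nat.lt_or_ge (i+1) α with h | h
      · exact le_of_lt (hfge _ h)
      · have h3 := ν.rowLen_anti α (i+1) (by omega)
        have h4 := ν.rowLen_anti (i+1) α (by omega)
        omega
    constructor <;> intro <;> omega
  have hUconv : (Finset.range α).filter (fun i => i = 0 ∨ ν.rowLen i - β < ν.rowLen (i-1) - β)
      = (Finset.range α).filter (fun i => i = 0 ∨ ν.rowLen i < ν.rowLen (i-1)) := by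
    apply Finset.filter_congr
    intro i hi
    rw [Finset.mem_range] at hi
    rcases Nat.eq_zero_or_pos i with h0 | h0
    · simp [h0]
    · have h1 := hfge i hi
      have h2 := hfge (i-1) (by omega)
      omega
  rw [hDconv, hUconv] at hcard hprod
  constructor
  · rw [hRemEq, hAddEq, card_image_pair (fun i => ν.rowLen i - 1), card_image_pair ν.rowLen]
    exact hcard
  · rw [hLHS, hprod, hRemEq, hAddEq, hprodR, hprodA, hcard]
    have hDne : (∏ i ∈ (Finset.range α).filter (fun i => i = 0 ∨ ν.rowLen i < ν.rowLen (i-1)),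
        (t^α - t^i * q^(ν.rowLen i - β))) ≠ 0 := by
      apply Finset.prod_ne_zero_iff.mpr
      intro i hi
      rw [Finset.mem_filter, Finset.mem_range] at hi
      have := hfge i hi.1
      exact tq_ne' (by omega) (by omega)
    rw [mul_div_assoc, mul_div_assoc,
      mul_div_mul_left _ _ (pow_ne_zero _ (pow_ne_zero _ q_ne_zero))]

end
end

section
/- Let ν ⊂ μ be partitions differing by a single cell. With d_{μν} = ∏_{s∈R_{μν}} (q^{a_ν(s)}−t^{l_ν(s)+1})/(q^{a_μ(s)}−t^{l_μ(s)+1}) · ∏_{s∈C_{μν}} (t^{l_ν(s)}−q^{a_ν(s)+1})/(t^{l_μ(s)}−q^{a_μ(s)+1}) and c_{μν} = ∏_{s∈R_{μν}} (t^{l_μ(s)}−q^{a_μ(s)+1})/(t^{l_ν(s)}−q^{a_ν(s)+1}) · ∏_{s∈C_{μν}} (q^{a_μ(s)}−t^{l_μ(s)+1})/(q^{a_ν(s)}−t^{l_ν(s)+1}), one has in ℚ(q,t) the relation d_{μν} = M·(w_ν/w_μ)·c_{μν}, where M = (1−t)(1−q) and w_λ = ∏_{c∈λ}(q^{a_λ(c)}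 − t^{l_λ(c)+1})(t^{l_λ(c)} − q^{a_λ(c)+1}). -/
open scoped Classical
open PowerSeries

noncomputable section

lemma qpow_sub_tpow_ne (a b : ℕ) : q ^ a - t ^ (b + 1) ≠ 0 := by
  intro h
  rw [sub_eq_zero] at h
  unfold q t at h
  rw [← map_pow, ← map_pow] at h
  have h2 := IsFractionRing.injective (MvPolynomial (Fin 2) ℚ) K h
  have h3 := congrArg (MvPolynomial.eval fun i : Fin 2 => if i = 0 then (2:ℚ) else 3) h2
  simp at h3
  have h4 : ((2^a : ℕ) : ℚ) = ((3^(b+1) : ℕ) : ℚ) := by push_cast; exact h3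
  have h5 : (2:ℕ)^a = 3^(b+1) := Nat.cast_injective h4
  have h6 : (3:ℕ) ∣ 2 ^ a := h5 ▸ dvd_pow_self 3 (Nat.succ_ne_zero b)
  have := Nat.Prime.dvd_of_dvd_pow Nat.prime_three h6
  omega

lemma tpow_sub_qpow_ne (a b : ℕ) : t ^ a - q ^ (b + 1) ≠ 0 := by
  intro h
  rw [sub_eq_zero] at h
  unfold q t at h
  rw [← map_pow, ← map_pow] at h
  have h2 := IsFractionRing.injective (MvPolynomial (Fin 2) ℚ) K h
  have h3 := congrArg (MvPolynomial.eval fun i : Fin 2 => if i = 0 then (2:ℚ) else 3) h2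
  simp at h3
  have h4 : ((3^a : ℕ) : ℚ) = ((2^(b+1) : ℕ) : ℚ) := by push_cast; exact h3
  have h5 : (3:ℕ)^a = 2^(b+1) := Nat.cast_injective h4
  have h6 : (2:ℕ) ∣ 3 ^ a := h5 ▸ dvd_pow_self 2 (Nat.succ_ne_zero b)
  have := Nat.Prime.dvd_of_dvd_pow Nat.prime_two h6
  omega

set_option maxHeartbeats 1000000 in
/-- the relation `d_{μν} = M·(w_ν/w_μ)·c_{μν}` between the `e₁`- and
`e₁^⊥`-Pieri coefficients of the modified Macdonald polynomials. -/
theorem stmt_7 (ν μ : YoungDiagram) (cel : ℕ × ℕ)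
    (hcel : cel ∉ ν.cells) (hμ : μ.cells = insert cel ν.cells)
    (M : K) (hM : M = (1 - t) * (1 - q))
    (wν wμ dmn cmn : K)
    (hwν : wν = ∏ s ∈ ν.cells,
      ((q ^ arm ν s - t ^ (leg ν s + 1)) * (t ^ leg ν s - q ^ (arm ν s + 1))))
    (hwμ : wμ = ∏ s ∈ μ.cells,
      ((q ^ arm μ s - t ^ (leg μ s + 1)) * (t ^ leg μ s - q ^ (arm μ s + 1))))
    (hd : dmn =
      (∏ s ∈ ν.cells.filter (fun s => s.1 = cel.1),
        (q ^ arm ν s - t ^ (leg ν s + 1)) / (q ^ arm μ s - t ^ (leg μ s + 1))) *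
      (∏ s ∈ ν.cells.filter (fun s => s.2 = cel.2),
        (t ^ leg ν s - q ^ (arm ν s + 1)) / (t ^ leg μ s - q ^ (arm μ s + 1))))
    (hc : cmn =
      (∏ s ∈ ν.cells.filter (fun s => s.1 = cel.1),
        (t ^ leg μ s - q ^ (arm μ s + 1)) / (t ^ leg ν s - q ^ (arm ν s + 1))) *
      (∏ s ∈ ν.cells.filter (fun s => s.2 = cel.2),
        (q ^ arm μ s - t ^ (leg μ s + 1)) / (q ^ arm ν s - t ^ (leg ν s + 1)))) :
    dmn = M * (wν / wμ) * cmn := by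
  have hlow := ν.isLowerSet
  have hrow : ∀ s ∈ ν.cells, s.1 = cel.1 → s.2 < cel.2 := by
    intro s hs h1
    by_contra hle
    push_neg at hle
    exact hcel (Finset.mem_coe.mp (hlow (Prod.le_def.mpr ⟨h1.ge, hle⟩) (Finset.mem_coe.mpr hs)))
  have hcol : ∀ s ∈ ν.cells, s.2 = cel.2 → s.1 < cel.1 := by
    intro s hs h2
    by_contra hle
    push_neg at hle
    exact hcel (Finset.mem_coe.mp (hlow (Prod.le_def.mpr ⟨hle, h2.ge⟩) (Finset.mem_coe.mpr hs)))
  have harm0 : arm μ cel = 0 := by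
    unfold arm
    rw [Finset.card_eq_zero, Finset.filter_eq_empty_iff]
    intro x hx
    rw [hμ, Finset.mem_insert] at hx
    rcases hx with rfl | hx
    · simp
    · rintro ⟨h1, h2⟩
      exact hcel (Finset.mem_coe.mp (hlow (Prod.le_def.mpr ⟨h1.ge, h2.le⟩) (Finset.mem_coe.mpr hx)))
  have hleg0 : leg μ cel = 0 := by
    unfold leg
    rw [Finset.card_eq_zero, Finset.filter_eq_empty_iff]
    intro x hx
    rw [hμ, Finset.mem_insert] at hx
    rcases hx with rfl | hx
    · simp
    · rintro ⟨h1, h2⟩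
      exact hcel (Finset.mem_coe.mp (hlow (Prod.le_def.mpr ⟨h2.le, h1.ge⟩) (Finset.mem_coe.mpr hx)))
  have harmR : ∀ s ∈ ν.cells, s.1 = cel.1 → arm μ s = arm ν s + 1 := by
    intro s hs h1
    unfold arm
    rw [hμ, Finset.filter_insert, if_pos ⟨h1.symm, hrow s hs h1⟩,
      Finset.card_insert_of_notMem (fun hmem => hcel (Finset.mem_filter.mp hmem).1)]
  have hlegR : ∀ s ∈ ν.cells, s.1 = cel.1 → leg μ s = leg ν s := by
    intro s hs h1
    unfold leg
    rw [hμ, Finset.filter_insert, if_neg]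
    rintro ⟨h2, -⟩
    have := hrow s hs h1
    omega
  have harmC : ∀ s ∈ ν.cells, s.2 = cel.2 → arm μ s = arm ν s := by
    intro s hs h2
    unfold arm
    rw [hμ, Finset.filter_insert, if_neg]
    rintro ⟨h1, -⟩
    have := hcol s hs h2
    omega
  have hlegC : ∀ s ∈ ν.cells, s.2 = cel.2 → leg μ s = leg ν s + 1 := by
    intro s hs h2
    unfold leg
    rw [hμ, Finset.filter_insert, if_pos ⟨h2.symm, hcol s hs h2⟩,
      Finset.card_insert_of_notMem (fun hmem => hcel (Finset.mem_filter.mp hmem).1)]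
  have hrest : ∀ s ∈ ν.cells, ¬(s.1 = cel.1 ∨ s.2 = cel.2) →
      arm μ s = arm ν s ∧ leg μ s = leg ν s := by
    intro s hs hn
    push_neg at hn
    constructor
    · unfold arm
      rw [hμ, Finset.filter_insert, if_neg]
      rintro ⟨h1, -⟩
      exact hn.1 h1.symm
    · unfold leg
      rw [hμ, Finset.filter_insert, if_neg]
      rintro ⟨h2, -⟩
      exact hn.2 h2.symm
  have hdisj : Disjoint (ν.cells.filter fun s => s.1 = cel.1)
      (ν.cells.filter fun s => s.2 = cel.2) := by
    rw [Finset.disjoint_left]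
    intro s hs1 hs2
    rw [Finset.mem_filter] at hs1 hs2
    have : s = cel := Prod.ext hs1.2 hs2.2
    exact hcel (this ▸ hs1.1)
  have hsplit : ∀ f : ℕ × ℕ → K, ∏ s ∈ ν.cells, f s =
      ((∏ s ∈ ν.cells.filter (fun s => s.1 = cel.1), f s) *
       (∏ s ∈ ν.cells.filter (fun s => s.2 = cel.2), f s)) *
      ∏ s ∈ ν.cells.filter (fun s => ¬(s.1 = cel.1 ∨ s.2 = cel.2)), f s := by
    intro f
    rw [← Finset.prod_filter_mul_prod_filter_not ν.cells
      (fun s => s.1 = cel.1 ∨ s.2 = cel.2), Finset.filter_or, Finset.prod_union hdisj]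
  have hEμν : ∏ s ∈ ν.cells.filter (fun s => ¬(s.1 = cel.1 ∨ s.2 = cel.2)),
      ((q ^ arm μ s - t ^ (leg μ s + 1)) * (t ^ leg μ s - q ^ (arm μ s + 1))) =
      ∏ s ∈ ν.cells.filter (fun s => ¬(s.1 = cel.1 ∨ s.2 = cel.2)),
      ((q ^ arm ν s - t ^ (leg ν s + 1)) * (t ^ leg ν s - q ^ (arm ν s + 1))) := by
    refine Finset.prod_congr rfl fun s hs => ?_
    rw [Finset.mem_filter] at hs
    obtain ⟨h1, h2⟩ := hrest s hs.1 hs.2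
    rw [h1, h2]
  -- nonzeroness
  have hA : ∀ (lam : YoungDiagram) (S : Finset (ℕ × ℕ)),
      (∏ s ∈ S, (q ^ arm lam s - t ^ (leg lam s + 1))) ≠ 0 :=
    fun lam S => Finset.prod_ne_zero_iff.mpr fun s _ => qpow_sub_tpow_ne _ _
  have hB : ∀ (lam : YoungDiagram) (S : Finset (ℕ × ℕ)),
      (∏ s ∈ S, (t ^ leg lam s - q ^ (arm lam s + 1))) ≠ 0 :=
    fun lam S => Finset.prod_ne_zero_iff.mpr fun s _ => tpow_sub_qpow_ne _ _
  have hEne : (∏ s ∈ ν.cells.filter (fun s => ¬(s.1 = cel.1 ∨ s.2 = cel.2)),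
      ((q ^ arm ν s - t ^ (leg ν s + 1)) * (t ^ leg ν s - q ^ (arm ν s + 1)))) ≠ 0 :=
    Finset.prod_ne_zero_iff.mpr fun s _ =>
      mul_ne_zero (qpow_sub_tpow_ne _ _) (tpow_sub_qpow_ne _ _)
  have h1t : (1 : K) - t ≠ 0 := by simpa using qpow_sub_tpow_ne 0 0
  have h1q : (1 : K) - q ≠ 0 := by simpa using tpow_sub_qpow_ne 0 0
  have hn1 := hA ν (ν.cells.filter (fun s => s.1 = cel.1))
  have hn2 := hA μ (ν.cells.filter (fun s => s.1 = cel.1))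
  have hn3 := hB ν (ν.cells.filter (fun s => s.1 = cel.1))
  have hn4 := hB μ (ν.cells.filter (fun s => s.1 = cel.1))
  have hn5 := hA ν (ν.cells.filter (fun s => s.2 = cel.2))
  have hn6 := hA μ (ν.cells.filter (fun s => s.2 = cel.2))
  have hn7 := hB ν (ν.cells.filter (fun s => s.2 = cel.2))
  have hn8 := hB μ (ν.cells.filter (fun s => s.2 = cel.2))
  rw [hd, hc, hM, hwν, hwμ, hμ, Finset.prod_insert hcel, hsplit, hsplit, hEμν,
    harm0, hleg0]
  simp only [Finset.prod_div_distrib, Finset.prod_mul_distrib, pow_zero, pow_one, zero_add]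
  set a1 := ∏ s ∈ ν.cells.filter (fun s => s.1 = cel.1), (q ^ arm ν s - t ^ (leg ν s + 1)) with ha1
  set a2 := ∏ s ∈ ν.cells.filter (fun s => s.1 = cel.1), (q ^ arm μ s - t ^ (leg μ s + 1)) with ha2
  set b1 := ∏ s ∈ ν.cells.filter (fun s => s.1 = cel.1), (t ^ leg ν s - q ^ (arm ν s + 1)) with hb1
  set b2 := ∏ s ∈ ν.cells.filter (fun s => s.1 = cel.1), (t ^ leg μ s - q ^ (arm μ s + 1)) with hb2
  set c1 := ∏ s ∈ ν.cells.filter (fun s => s.2 = cel.2), (q ^ arm ν s - t ^ (leg ν s + 1)) with hc1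
  set c2 := ∏ s ∈ ν.cells.filter (fun s => s.2 = cel.2), (q ^ arm μ s - t ^ (leg μ s + 1)) with hc2
  set d1 := ∏ s ∈ ν.cells.filter (fun s => s.2 = cel.2), (t ^ leg ν s - q ^ (arm ν s + 1)) with hd1
  set d2 := ∏ s ∈ ν.cells.filter (fun s => s.2 = cel.2), (t ^ leg μ s - q ^ (arm μ s + 1)) with hd2
  set e1 := ∏ s ∈ ν.cells.filter (fun s => ¬(s.1 = cel.1 ∨ s.2 = cel.2)), (q ^ arm ν s - t ^ (leg ν s + 1)) with he1
  set e2 := ∏ s ∈ ν.cells.filter (fun s => ¬(s.1 = cel.1 ∨ s.2 = cel.2)), (t ^ leg ν s - q ^ (arm ν s + 1)) with he2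
  have he1' : e1 ≠ 0 := hA ν _
  have he2' : e2 ≠ 0 := hB ν _
  clear_value a1 a2 b1 b2 c1 c2 d1 d2 e1 e2
  have hMne : ((1:K) - t) * (1 - q) ≠ 0 := mul_ne_zero h1t h1q
  have hcancel : (1 - t) * (1 - q) *
      (a1 * b1 * (c1 * d1) * (e1 * e2) /
        ((1 - t) * (1 - q) * (a2 * b2 * (c2 * d2) * (e1 * e2)))) =
      a1 * b1 * (c1 * d1) * (e1 * e2) / (a2 * b2 * (c2 * d2) * (e1 * e2)) := by
    rw [← mul_div_assoc, mul_div_mul_left _ _ hMne]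
  rw [hcancel, div_mul_div_comm, div_mul_div_comm, div_mul_div_comm,
    div_eq_div_iff (mul_ne_zero hn2 hn8)
      (mul_ne_zero (mul_ne_zero (mul_ne_zero (mul_ne_zero hn2 hn4) (mul_ne_zero hn6 hn8)) (mul_ne_zero he1' he2')) (mul_ne_zero hn3 hn5))]
  ring

end
end
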